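/- arXiv:2309.11588 — 5 statements merged into one kernel-verified Lean document; each statement's English description precedes it below -/
import Mathlib

section
/- Consider the networked SEIRS model with travel flows on n subpopulations. Suppose the flow balance assumption holds (γ_i = Σ_{j≠i} Φ_{ij} for every i), all parameters α_i, β_i, σ_i, δ_i are strictly positive, and the initial conditions satisfy s_i(0), e_i(0), x_i(0), r_i(0) ∈ [0,1] with s_i(0)+e_i(0)+x_i(0)+r_i(0) = 1 for every i. Then for every differentiable solution (s(t), e(t), x(t), r(t)) of the dynamics and every t ≥ 0 and every i, one has s_i(t), e_i(t), x_i(t), r_i(t) ∈ [0,1] and s_i(t)+e_i(t)+x_i(t)+r_i(t) = 1. -/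
open Finset Set intervalIntegral MeasureTheory

private lemma contOn_sum {ι : Type*} (sfin : Finset ι) {F : ι → ℝ → ℝ} {U : Set ℝ}
    (h : ∀ i ∈ sfin, ContinuousOn (F i) U) :
    ContinuousOn (fun t => ∑ i ∈ sfin, F i t) U := by
  induction sfin using Finset.cons_induction with
  | empty => simpa using continuousOn_const
  | cons a s ha ih =>
    simp only [Finset.sum_cons]
    exact (h a (Finset.mem_cons_self a s)).add (ih fun i hi => h i (Finset.mem_cons_of_mem hi))

private lemma contOn_negpart {f : ℝ → ℝ} {U : Set ℝ} (hf : ContinuousOn f U) :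
    ContinuousOn (fun t => max (-(f t)) 0) U := by
  have h := hf.neg.sup (continuousOn_const (c := (0:ℝ)))
  simpa using h

private lemma aux_lin {a c u g : ℝ} (h1 : -c ≤ a) (h2 : a ≤ c) (h3 : -g ≤ u) (hg : 0 ≤ g) :
    -(c * u) - 2*(c*g) ≤ -(a * u) := by
  nlinarith [mul_nonneg (by linarith : (0:ℝ) ≤ c - a) (by linarith : (0:ℝ) ≤ u + g),
    mul_nonneg (by linarith : (0:ℝ) ≤ c + a) hg]

private lemma aux_mul {X S M g : ℝ} (hX : |X| ≤ M) (hS : |S| ≤ M) (hXg : -g ≤ X) (hSg : -g ≤ S)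
    (hg : 0 ≤ g) : -(M * g) ≤ X * S := by
  have hM : 0 ≤ M := le_trans (abs_nonneg _) hX
  have hX' : X ≤ M := le_trans (le_abs_self _) hX
  have hS' : S ≤ M := le_trans (le_abs_self _) hS
  rcases le_or_gt 0 X with hx | hx
  · rcases le_or_gt 0 S with hs | hs
    · nlinarith
    · nlinarith [mul_nonneg (by linarith : (0:ℝ) ≤ M - X) (by linarith : (0:ℝ) ≤ -S),
        mul_nonneg hM (by linarith : (0:ℝ) ≤ S + g)]
  · rcases le_or_gt 0 S with hs | hs
    · nlinarith [mul_nonneg (by linarith : (0:ℝ) ≤ M - S) (by linarith : (0:ℝ) ≤ -X),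
        mul_nonneg hM (by linarith : (0:ℝ) ≤ X + g)]
    · nlinarith [mul_pos (by linarith : (0:ℝ) < -X) (by linarith : (0:ℝ) < -S),
        mul_nonneg hM hg]

/-- Integral form of Grönwall: a nonnegative continuous function dominated by `K` times its own
integral vanishes. -/
private lemma gron_int {T K : ℝ} (hT : 0 ≤ T) (hK : 0 ≤ K) {g : ℝ → ℝ}
    (hgc : ContinuousOn g (Set.Icc 0 T)) (hg0 : ∀ t ∈ Set.Icc (0:ℝ) T, 0 ≤ g t)
    (hb : ∀ t ∈ Set.Icc (0:ℝ) T, g t ≤ K * ∫ τ in (0:ℝ)..t, g τ) :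
    ∀ t ∈ Set.Icc (0:ℝ) T, g t = 0 := by
  set G : ℝ → ℝ := fun u => ∫ τ in (0:ℝ)..u, g τ with hGdef
  have hint : MeasureTheory.IntegrableOn g (Set.Icc 0 T) := hgc.integrableOn_Icc
  have hGc : ContinuousOn G (Set.Icc 0 T) := by
    have := intervalIntegral.continuousOn_primitive_interval (a := (0:ℝ)) (b := T) (μ := volume)
      (by rwa [Set.uIcc_of_le hT])
    rwa [Set.uIcc_of_le hT] at this
  have hGnn : ∀ u ∈ Set.Icc (0:ℝ) T, 0 ≤ G u := fun u hu =>
    intervalIntegral.integral_nonneg hu.1 (fun τ hτ => hg0 τ ⟨hτ.1, le_trans hτ.2 hu.2⟩)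
  have hGd : ∀ u ∈ Set.Ico (0:ℝ) T, HasDerivWithinAt G (g u) (Set.Ici u) u := by
    intro u hu
    have h1 : IntervalIntegrable g volume 0 u := by
      apply ContinuousOn.intervalIntegrable
      rw [Set.uIcc_of_le hu.1]
      exact hgc.mono (Set.Icc_subset_Icc le_rfl hu.2.le)
    have hmem : Set.Icc u T ∈ nhdsWithin u (Set.Ici u) := Icc_mem_nhdsGE_of_mem ⟨le_rfl, hu.2⟩
    have hmem' : Set.Icc u T ∈ nhdsWithin u (Set.Ioi u) :=
      nhdsWithin_mono u Set.Ioi_subset_Ici_self hmem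
    have hmeas : StronglyMeasurableAtFilter g (nhdsWithin u (Set.Ioi u)) :=
      ⟨Set.Icc u T, hmem',
        ((hgc.mono (Set.Icc_subset_Icc hu.1 le_rfl)).aestronglyMeasurable measurableSet_Icc)⟩
    have hcw : ContinuousWithinAt g (Set.Ioi u) u :=
      (((hgc.mono (Set.Icc_subset_Icc hu.1 le_rfl)) u ⟨le_rfl, hu.2.le⟩).mono_of_mem_nhdsWithin hmem).mono Set.Ioi_subset_Ici_self
    exact intervalIntegral.integral_hasDerivWithinAt_right h1 hmeas hcw
  have key : ∀ t ∈ Set.Icc (0:ℝ) T, ‖G t‖ ≤ gronwallBound 0 K 0 (t - 0) := by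
    apply norm_le_gronwallBound_of_norm_deriv_right_le hGc hGd
    · simp [hGdef]
    · intro u hu
      have h1 : 0 ≤ G u := hGnn u ⟨hu.1, hu.2.le⟩
      have h2 : 0 ≤ g u := hg0 u ⟨hu.1, hu.2.le⟩
      rw [Real.norm_eq_abs, Real.norm_eq_abs, abs_of_nonneg h1, abs_of_nonneg h2, add_zero]
      exact hb u ⟨hu.1, hu.2.le⟩
  intro t ht
  have hG0 : G t = 0 := by
    have := key t ht
    rw [gronwallBound_ε0_δ0, Real.norm_eq_abs] at this
    exact abs_eq_zero.mp (le_antisymm this (abs_nonneg _))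
  have := hb t ht
  rw [show (∫ τ in (0:ℝ)..t, g τ) = G t from rfl, hG0, mul_zero] at this
  exact le_antisymm this (hg0 t ht)

/-- Lower bound propagation via an integrating factor. -/
private lemma lower_via_int {T c L : ℝ} (hc : 0 ≤ c) (hL : 0 ≤ L)
    {y d g : ℝ → ℝ}
    (hy : ∀ t ∈ Set.Icc (0:ℝ) T, HasDerivAt y (d t) t)
    (hdc : ContinuousOn d (Set.Icc 0 T))
    (hyc : ContinuousOn y (Set.Icc 0 T))
    (hgc : ContinuousOn g (Set.Icc 0 T)) (hg0 : ∀ t ∈ Set.Icc (0:ℝ) T, 0 ≤ g t)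
    (hy0 : 0 ≤ y 0)
    (hbound : ∀ t ∈ Set.Icc (0:ℝ) T, -(c * y t) - L * g t ≤ d t) :
    ∀ t ∈ Set.Icc (0:ℝ) T, -(Real.exp (c*T) * L * ∫ τ in (0:ℝ)..t, g τ) ≤ y t := by
  intro t ht
  have hT : (0:ℝ) ≤ T := le_trans ht.1 ht.2
  set z : ℝ → ℝ := fun u => Real.exp (c*u) * y u with hzdef
  set z' : ℝ → ℝ := fun u => Real.exp (c*u) * (c * y u + d u) with hz'def
  have hsub : Set.Icc (0:ℝ) t ⊆ Set.Icc (0:ℝ) T := Set.Icc_subset_Icc le_rfl ht.2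
  have hz : ∀ u ∈ Set.Icc (0:ℝ) t, HasDerivAt z (z' u) u := by
    intro u hu
    have h1 : HasDerivAt (fun v : ℝ => Real.exp (c*v)) (Real.exp (c*u) * c) u := by
      simpa [Function.comp_def] using (Real.hasDerivAt_exp (c*u)).comp u ((hasDerivAt_id u).const_mul c)
    have h2 := h1.mul (hy u (hsub hu))
    refine h2.congr_deriv ?_
    simp only [hz'def]
    ring
  have hz'c : ContinuousOn z' (Set.Icc 0 t) :=
    (((Real.continuous_exp.comp (continuous_const.mul continuous_id)).continuousOn).mul
      ((continuousOn_const.mul hyc).add hdc)).mono hsub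
  have hlow : ∀ u ∈ Set.Icc (0:ℝ) t, -(Real.exp (c*T) * L * g u) ≤ z' u := by
    intro u hu
    have hu' := hsub hu
    have h1 : -(L * g u) ≤ c * y u + d u := by have := hbound u hu'; linarith
    have h2 : Real.exp (c*u) * (-(L * g u)) ≤ z' u :=
      mul_le_mul_of_nonneg_left h1 (Real.exp_pos _).le
    have h3 : Real.exp (c*u) ≤ Real.exp (c*T) :=
      Real.exp_le_exp.mpr (mul_le_mul_of_nonneg_left hu'.2 hc)
    have h4 : 0 ≤ L * g u := mul_nonneg hL (hg0 u hu')
    nlinarith [Real.exp_pos (c*u)]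
  have hInt1 : IntervalIntegrable z' volume 0 t := by
    apply ContinuousOn.intervalIntegrable; rwa [Set.uIcc_of_le ht.1]
  have hInt2 : IntervalIntegrable (fun u => -(Real.exp (c*T) * L * g u)) volume 0 t := by
    apply ContinuousOn.intervalIntegrable
    rw [Set.uIcc_of_le ht.1]
    exact ((continuousOn_const.mul (hgc.mono hsub)).neg)
  have ftc : ∫ u in (0:ℝ)..t, z' u = z t - z 0 := by
    apply intervalIntegral.integral_eq_sub_of_hasDerivAt
    · intro u hu; rw [Set.uIcc_of_le ht.1] at hu; exact hz u hu
    · exact hInt1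
  have mono : ∫ u in (0:ℝ)..t, -(Real.exp (c*T) * L * g u) ≤ ∫ u in (0:ℝ)..t, z' u :=
    intervalIntegral.integral_mono_on ht.1 hInt2 hInt1 hlow
  have hIeq : ∫ u in (0:ℝ)..t, -(Real.exp (c*T) * L * g u)
      = -(Real.exp (c*T) * L * ∫ u in (0:ℝ)..t, g u) := by
    rw [intervalIntegral.integral_neg, intervalIntegral.integral_const_mul]
  have hz0 : z 0 = y 0 := by simp [hzdef]
  have hzt : -(Real.exp (c*T) * L * ∫ τ in (0:ℝ)..t, g τ) ≤ z t := by
    rw [hIeq] at mono; rw [ftc] at mono; rw [hz0] at mono; linarith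
  have hBnp : -(Real.exp (c*T) * L * ∫ τ in (0:ℝ)..t, g τ) ≤ 0 := by
    have : 0 ≤ ∫ τ in (0:ℝ)..t, g τ :=
      intervalIntegral.integral_nonneg ht.1 (fun τ hτ => hg0 τ (hsub hτ))
    have := mul_nonneg (mul_nonneg (Real.exp_pos (c*T)).le hL) this
    linarith
  have hE1 : 1 ≤ Real.exp (c*t) := Real.one_le_exp (mul_nonneg hc ht.1)
  have hzy : z t = Real.exp (c*t) * y t := rfl
  rcases le_or_gt 0 (y t) with hyt | hyt
  · linarith
  · nlinarith [hzt, hzy]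
set_option maxHeartbeats 1000000 in
/-- **Lemma (well-definedness of the networked SEIRS model with travel flows).**
Under the flow-balance assumption and valid parameters/initial conditions, every
differentiable solution stays in `[0,1]` componentwise and sums to one at each node. -/
theorem seirs_flows_well_defined
    {n : ℕ} (hn : 1 ≤ n)
    (N α β σ δ γ : Fin n → ℝ) (w : Fin n → Fin n → ℝ)
    (hN : ∀ i, 0 < N i) (hα : ∀ i, 0 < α i) (hβ : ∀ i, 0 < β i)
    (hσ : ∀ i, 0 < σ i) (hδ : ∀ i, 0 < δ i) (hγ : ∀ i, 0 < γ i)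
    (hwdiag : ∀ i, w i i = 0) (hwnn : ∀ i j, 0 ≤ w i j)
    (hwsum : ∀ j, ∑ i ∈ Finset.univ.erase j, w i j = 1)
    (Φ : Fin n → Fin n → ℝ)
    (hΦ : ∀ i j, Φ i j = if i = j then 0 else (N j / N i) * w i j * γ j)
    (hbal : ∀ i, γ i = ∑ j ∈ Finset.univ.erase i, Φ i j)
    (s e x r : ℝ → Fin n → ℝ)
    (hs0 : ∀ i, s 0 i ∈ Set.Icc (0 : ℝ) 1)
    (he0 : ∀ i, e 0 i ∈ Set.Icc (0 : ℝ) 1)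
    (hx0 : ∀ i, x 0 i ∈ Set.Icc (0 : ℝ) 1)
    (hr0 : ∀ i, r 0 i ∈ Set.Icc (0 : ℝ) 1)
    (hsum0 : ∀ i, s 0 i + e 0 i + x 0 i + r 0 i = 1)
    (hds : ∀ t ≥ (0 : ℝ), ∀ i, HasDerivAt (fun τ => s τ i)
      (α i * r t i - (β i * x t i + γ i) * s t i +
        ∑ j ∈ Finset.univ.erase i, Φ i j * s t j) t)
    (hde : ∀ t ≥ (0 : ℝ), ∀ i, HasDerivAt (fun τ => e τ i)
      (β i * x t i * s t i - (σ i + γ i) * e t i +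
        ∑ j ∈ Finset.univ.erase i, Φ i j * e t j) t)
    (hdx : ∀ t ≥ (0 : ℝ), ∀ i, HasDerivAt (fun τ => x τ i)
      (σ i * e t i - (δ i + γ i) * x t i +
        ∑ j ∈ Finset.univ.erase i, Φ i j * x t j) t)
    (hdr : ∀ t ≥ (0 : ℝ), ∀ i, HasDerivAt (fun τ => r τ i)
      (δ i * x t i - (α i + γ i) * r t i +
        ∑ j ∈ Finset.univ.erase i, Φ i j * r t j) t) :
    ∀ t ≥ (0 : ℝ), ∀ i,
      s t i ∈ Set.Icc (0 : ℝ) 1 ∧ e t i ∈ Set.Icc (0 : ℝ) 1 ∧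
      x t i ∈ Set.Icc (0 : ℝ) 1 ∧ r t i ∈ Set.Icc (0 : ℝ) 1 ∧
      s t i + e t i + x t i + r t i = 1 := by
  intro T hT i₀
  -- nonnegativity of the flow matrix
  have hΦnn : ∀ i j, 0 ≤ Φ i j := by
    intro i j
    rw [hΦ i j]
    split
    · exact le_rfl
    · exact mul_nonneg (mul_nonneg (div_nonneg (hN j).le (hN i).le) (hwnn i j)) (hγ j).le
  -- continuity of the components on [0, T]
  have hsc : ∀ i, ContinuousOn (fun τ => s τ i) (Set.Icc 0 T) :=
    fun i u hu => ((hds u hu.1 i).continuousAt).continuousWithinAt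
  have hec : ∀ i, ContinuousOn (fun τ => e τ i) (Set.Icc 0 T) :=
    fun i u hu => ((hde u hu.1 i).continuousAt).continuousWithinAt
  have hxc : ∀ i, ContinuousOn (fun τ => x τ i) (Set.Icc 0 T) :=
    fun i u hu => ((hdx u hu.1 i).continuousAt).continuousWithinAt
  have hrc : ∀ i, ContinuousOn (fun τ => r τ i) (Set.Icc 0 T) :=
    fun i u hu => ((hdr u hu.1 i).continuousAt).continuousWithinAt
  -- a uniform bound M on all components on [0, T]
  choose Cs hCs using fun i => isCompact_Icc.exists_bound_of_continuousOn (hsc i)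
  choose Ce hCe using fun i => isCompact_Icc.exists_bound_of_continuousOn (hec i)
  choose Cx hCx using fun i => isCompact_Icc.exists_bound_of_continuousOn (hxc i)
  choose Cr hCr using fun i => isCompact_Icc.exists_bound_of_continuousOn (hrc i)
  set M : ℝ := ∑ i : Fin n, (|Cs i| + |Ce i| + |Cx i| + |Cr i|) with hMdef
  have hM0 : 0 ≤ M := Finset.sum_nonneg fun i _ => by positivity
  have hMterm : ∀ i : Fin n, |Cs i| + |Ce i| + |Cx i| + |Cr i| ≤ M :=
    fun i => Finset.single_le_sum (f := fun i => |Cs i| + |Ce i| + |Cx i| + |Cr i|)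
      (fun j _ => by positivity) (Finset.mem_univ i)
  have hMall : ∀ t ∈ Set.Icc (0:ℝ) T, ∀ i,
      |s t i| ≤ M ∧ |e t i| ≤ M ∧ |x t i| ≤ M ∧ |r t i| ≤ M := by
    intro t ht i
    have h1 := hCs i t ht; have h2 := hCe i t ht; have h3 := hCx i t ht; have h4 := hCr i t ht
    rw [Real.norm_eq_abs] at h1 h2 h3 h4
    have := hMterm i
    have a1 := le_abs_self (Cs i); have a2 := le_abs_self (Ce i)
    have a3 := le_abs_self (Cx i); have a4 := le_abs_self (Cr i)
    have b1 := abs_nonneg (Cs i); have b2 := abs_nonneg (Ce i)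
    have b3 := abs_nonneg (Cx i); have b4 := abs_nonneg (Cr i)
    exact ⟨by linarith, by linarith, by linarith, by linarith⟩
  -- the constant c
  set c : ℝ := 1 + ∑ i : Fin n, (α i + β i * M + σ i + δ i + γ i) with hcdef
  have hterm0 : ∀ j : Fin n, 0 ≤ α j + β j * M + σ j + δ j + γ j := by
    intro j
    have := (hα j).le; have := (hσ j).le; have := (hδ j).le; have := (hγ j).le
    have := mul_nonneg (hβ j).le hM0
    linarith
  have hci : ∀ i, α i + β i * M + σ i + δ i + γ i ≤ c := by
    intro i
    have h : α i + β i * M + σ i + δ i + γ i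
        ≤ ∑ j : Fin n, (α j + β j * M + σ j + δ j + γ j) :=
      Finset.single_le_sum (fun j _ => hterm0 j) (Finset.mem_univ i)
    rw [hcdef]; linarith
  have hc0 : (0:ℝ) ≤ c := by
    have : (0:ℝ) ≤ ∑ i : Fin n, (α i + β i * M + σ i + δ i + γ i) :=
      Finset.sum_nonneg fun i _ => hterm0 i
    rw [hcdef]; linarith
  have hcoef : ∀ i, α i ≤ c ∧ β i * M + γ i ≤ c ∧ σ i + γ i ≤ c ∧ δ i + γ i ≤ c ∧
      γ i ≤ c ∧ α i + γ i ≤ c ∧ σ i ≤ c ∧ δ i ≤ c ∧ β i * M ≤ c := by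
    intro i
    have h := hci i
    have hβM : 0 ≤ β i * M := mul_nonneg (hβ i).le hM0
    have := (hα i).le; have := (hσ i).le; have := (hδ i).le; have := (hγ i).le
    refine ⟨by linarith, by linarith, by linarith, by linarith, by linarith, by linarith,
      by linarith, by linarith, by linarith⟩
  clear_value M c
  -- the total negative part
  set g : ℝ → ℝ := fun t => ∑ i : Fin n,
    (max (-(s t i)) 0 + max (-(e t i)) 0 + max (-(x t i)) 0 + max (-(r t i)) 0) with hgdef
  have hgc : ContinuousOn g (Set.Icc 0 T) := by
    apply contOn_sum
    intro i _
    exact ((contOn_negpart (hsc i)).add (contOn_negpart (hec i))).add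
      ((contOn_negpart (hxc i)).add (contOn_negpart (hrc i))) |>.congr
      (fun u _ => by simp only [Pi.add_apply, add_assoc])
  have hg0 : ∀ t, 0 ≤ g t := fun t => Finset.sum_nonneg fun i _ => by positivity
  have hcomp : ∀ t, ∀ i, -(g t) ≤ s t i ∧ -(g t) ≤ e t i ∧ -(g t) ≤ x t i ∧ -(g t) ≤ r t i := by
    intro t i
    have hsum_i : max (-(s t i)) 0 + max (-(e t i)) 0 + max (-(x t i)) 0 + max (-(r t i)) 0 ≤ g t :=
      Finset.single_le_sum (f := fun i => max (-(s t i)) 0 + max (-(e t i)) 0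
        + max (-(x t i)) 0 + max (-(r t i)) 0) (fun j _ => by positivity) (Finset.mem_univ i)
    have m1 := le_max_left (-(s t i)) 0; have m2 := le_max_left (-(e t i)) 0
    have m3 := le_max_left (-(x t i)) 0; have m4 := le_max_left (-(r t i)) 0
    have p1 := le_max_right (-(s t i)) 0; have p2 := le_max_right (-(e t i)) 0
    have p3 := le_max_right (-(x t i)) 0; have p4 := le_max_right (-(r t i)) 0
    exact ⟨by linarith, by linarith, by linarith, by linarith⟩
  -- flow sums bounded below
  have hsumΦ : ∀ (i : Fin n) (f : Fin n → ℝ) (G : ℝ), 0 ≤ G → (∀ j, -G ≤ f j) →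
      -(γ i * G) ≤ ∑ j ∈ Finset.univ.erase i, Φ i j * f j := by
    intro i f G hG hf
    have h1 : ∑ j ∈ Finset.univ.erase i, Φ i j * (-G)
        ≤ ∑ j ∈ Finset.univ.erase i, Φ i j * f j :=
      Finset.sum_le_sum fun j _ => mul_le_mul_of_nonneg_left (hf j) (hΦnn i j)
    have h2 : ∑ j ∈ Finset.univ.erase i, Φ i j * (-G) = -(γ i * G) := by
      rw [← Finset.sum_mul, ← hbal i]; ring
    linarith
  -- lower bounds on the right-hand sides
  have hDs_lb : ∀ i, ∀ t ∈ Set.Icc (0:ℝ) T,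
      -(c * s t i) - (4*c) * g t ≤ α i * r t i - (β i * x t i + γ i) * s t i +
        ∑ j ∈ Finset.univ.erase i, Φ i j * s t j := by
    intro i t ht
    obtain ⟨hm_s, hm_e, hm_x, hm_r⟩ := hMall t ht i
    obtain ⟨hg_s, hg_e, hg_x, hg_r⟩ := hcomp t i
    obtain ⟨hαc, hβMγ, hσγ, hδγ, hγc, hαγ, hσc, hδc, hβMc⟩ := hcoef i
    have hgt := hg0 t
    have h1 : -(c * g t) ≤ α i * r t i := by
      nlinarith [mul_le_mul_of_nonneg_left hg_r (hα i).le, mul_le_mul_of_nonneg_right hαc hgt]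
    have hx' := abs_le.mp hm_x
    have h2 : -(c * s t i) - 2*(c * g t) ≤ -((β i * x t i + γ i) * s t i) := by
      apply aux_lin _ _ hg_s hgt
      · nlinarith [mul_le_mul_of_nonneg_left hx'.1 (hβ i).le, (hγ i).le]
      · nlinarith [mul_le_mul_of_nonneg_left hx'.2 (hβ i).le]
    have h3 : -(c * g t) ≤ ∑ j ∈ Finset.univ.erase i, Φ i j * s t j := by
      have hsp : -(γ i * g t) ≤ ∑ j ∈ Finset.univ.erase i, Φ i j * s t j :=
        hsumΦ i (fun j => s t j) (g t) hgt (fun j => (hcomp t j).1)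
      nlinarith [mul_le_mul_of_nonneg_right hγc hgt]
    linarith
  have hDe_lb : ∀ i, ∀ t ∈ Set.Icc (0:ℝ) T,
      -(c * e t i) - (4*c) * g t ≤ β i * x t i * s t i - (σ i + γ i) * e t i +
        ∑ j ∈ Finset.univ.erase i, Φ i j * e t j := by
    intro i t ht
    obtain ⟨hm_s, hm_e, hm_x, hm_r⟩ := hMall t ht i
    obtain ⟨hg_s, hg_e, hg_x, hg_r⟩ := hcomp t i
    obtain ⟨hαc, hβMγ, hσγ, hδγ, hγc, hαγ, hσc, hδc, hβMc⟩ := hcoef i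
    have hgt := hg0 t
    have h1 : -(c * g t) ≤ β i * x t i * s t i := by
      have := aux_mul hm_x hm_s hg_x hg_s hgt
      nlinarith [mul_le_mul_of_nonneg_left this (hβ i).le,
        mul_le_mul_of_nonneg_right hβMc hgt]
    have h2 : -(c * e t i) - 2*(c * g t) ≤ -((σ i + γ i) * e t i) := by
      apply aux_lin _ hσγ hg_e hgt
      have := (hσ i).le; have := (hγ i).le; linarith
    have h3 : -(c * g t) ≤ ∑ j ∈ Finset.univ.erase i, Φ i j * e t j := by
      have hsp : -(γ i * g t) ≤ ∑ j ∈ Finset.univ.erase i, Φ i j * e t j :=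
        hsumΦ i (fun j => e t j) (g t) hgt (fun j => (hcomp t j).2.1)
      nlinarith [mul_le_mul_of_nonneg_right hγc hgt]
    linarith
  have hDx_lb : ∀ i, ∀ t ∈ Set.Icc (0:ℝ) T,
      -(c * x t i) - (4*c) * g t ≤ σ i * e t i - (δ i + γ i) * x t i +
        ∑ j ∈ Finset.univ.erase i, Φ i j * x t j := by
    intro i t ht
    obtain ⟨hg_s, hg_e, hg_x, hg_r⟩ := hcomp t i
    obtain ⟨hαc, hβMγ, hσγ, hδγ, hγc, hαγ, hσc, hδc, hβMc⟩ := hcoef i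
    have hgt := hg0 t
    have h1 : -(c * g t) ≤ σ i * e t i := by
      nlinarith [mul_le_mul_of_nonneg_left hg_e (hσ i).le, mul_le_mul_of_nonneg_right hσc hgt]
    have h2 : -(c * x t i) - 2*(c * g t) ≤ -((δ i + γ i) * x t i) := by
      apply aux_lin _ hδγ hg_x hgt
      have := (hδ i).le; have := (hγ i).le; linarith
    have h3 : -(c * g t) ≤ ∑ j ∈ Finset.univ.erase i, Φ i j * x t j := by
      have hsp : -(γ i * g t) ≤ ∑ j ∈ Finset.univ.erase i, Φ i j * x t j :=
        hsumΦ i (fun j => x t j) (g t) hgt (fun j => (hcomp t j).2.2.1)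
      nlinarith [mul_le_mul_of_nonneg_right hγc hgt]
    linarith
  have hDr_lb : ∀ i, ∀ t ∈ Set.Icc (0:ℝ) T,
      -(c * r t i) - (4*c) * g t ≤ δ i * x t i - (α i + γ i) * r t i +
        ∑ j ∈ Finset.univ.erase i, Φ i j * r t j := by
    intro i t ht
    obtain ⟨hg_s, hg_e, hg_x, hg_r⟩ := hcomp t i
    obtain ⟨hαc, hβMγ, hσγ, hδγ, hγc, hαγ, hσc, hδc, hβMc⟩ := hcoef i
    have hgt := hg0 t
    have h1 : -(c * g t) ≤ δ i * x t i := by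
      nlinarith [mul_le_mul_of_nonneg_left hg_x (hδ i).le, mul_le_mul_of_nonneg_right hδc hgt]
    have h2 : -(c * r t i) - 2*(c * g t) ≤ -((α i + γ i) * r t i) := by
      apply aux_lin _ hαγ hg_r hgt
      have := (hα i).le; have := (hγ i).le; linarith
    have h3 : -(c * g t) ≤ ∑ j ∈ Finset.univ.erase i, Φ i j * r t j := by
      have hsp : -(γ i * g t) ≤ ∑ j ∈ Finset.univ.erase i, Φ i j * r t j :=
        hsumΦ i (fun j => r t j) (g t) hgt (fun j => (hcomp t j).2.2.2)
      nlinarith [mul_le_mul_of_nonneg_right hγc hgt]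
    linarith
  -- continuity of the right-hand sides
  have hsum_cont : ∀ (f : ℝ → Fin n → ℝ), (∀ i, ContinuousOn (fun τ => f τ i) (Set.Icc 0 T)) →
      ∀ i, ContinuousOn (fun t => ∑ j ∈ Finset.univ.erase i, Φ i j * f t j) (Set.Icc 0 T) :=
    fun f hf i => contOn_sum _ fun j _ => continuousOn_const.mul (hf j)
  have hL0 : (0:ℝ) ≤ 4*c := by linarith
  -- lower bounds on components via the integrating-factor lemma
  have hBs : ∀ i, ∀ t ∈ Set.Icc (0:ℝ) T,
      -(Real.exp (c*T) * (4*c) * ∫ τ in (0:ℝ)..t, g τ) ≤ s t i := by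
    intro i
    exact lower_via_int hc0 hL0 (y := fun τ => s τ i)
      (d := fun t => α i * r t i - (β i * x t i + γ i) * s t i +
        ∑ j ∈ Finset.univ.erase i, Φ i j * s t j)
      (fun t ht => hds t ht.1 i)
      (((continuousOn_const.mul (hrc i)).sub
        (((continuousOn_const.mul (hxc i)).add continuousOn_const).mul (hsc i))).add
        (hsum_cont s hsc i))
      (hsc i) hgc (fun t _ => hg0 t) (hs0 i).1 (hDs_lb i)
  have hBe : ∀ i, ∀ t ∈ Set.Icc (0:ℝ) T,
      -(Real.exp (c*T) * (4*c) * ∫ τ in (0:ℝ)..t, g τ) ≤ e t i := by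
    intro i
    exact lower_via_int hc0 hL0 (y := fun τ => e τ i)
      (d := fun t => β i * x t i * s t i - (σ i + γ i) * e t i +
        ∑ j ∈ Finset.univ.erase i, Φ i j * e t j)
      (fun t ht => hde t ht.1 i)
      ((((continuousOn_const.mul (hxc i)).mul (hsc i)).sub
        (continuousOn_const.mul (hec i))).add (hsum_cont e hec i))
      (hec i) hgc (fun t _ => hg0 t) (he0 i).1 (hDe_lb i)
  have hBx : ∀ i, ∀ t ∈ Set.Icc (0:ℝ) T,
      -(Real.exp (c*T) * (4*c) * ∫ τ in (0:ℝ)..t, g τ) ≤ x t i := by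
    intro i
    exact lower_via_int hc0 hL0 (y := fun τ => x τ i)
      (d := fun t => σ i * e t i - (δ i + γ i) * x t i +
        ∑ j ∈ Finset.univ.erase i, Φ i j * x t j)
      (fun t ht => hdx t ht.1 i)
      (((continuousOn_const.mul (hec i)).sub
        (continuousOn_const.mul (hxc i))).add (hsum_cont x hxc i))
      (hxc i) hgc (fun t _ => hg0 t) (hx0 i).1 (hDx_lb i)
  have hBr : ∀ i, ∀ t ∈ Set.Icc (0:ℝ) T,
      -(Real.exp (c*T) * (4*c) * ∫ τ in (0:ℝ)..t, g τ) ≤ r t i := by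
    intro i
    exact lower_via_int hc0 hL0 (y := fun τ => r τ i)
      (d := fun t => δ i * x t i - (α i + γ i) * r t i +
        ∑ j ∈ Finset.univ.erase i, Φ i j * r t j)
      (fun t ht => hdr t ht.1 i)
      (((continuousOn_const.mul (hxc i)).sub
        (continuousOn_const.mul (hrc i))).add (hsum_cont r hrc i))
      (hrc i) hgc (fun t _ => hg0 t) (hr0 i).1 (hDr_lb i)
  -- Grönwall for g
  have hgK : ∀ t ∈ Set.Icc (0:ℝ) T,
      g t ≤ ((n:ℝ) * (4 * (Real.exp (c*T) * (4*c)))) * ∫ τ in (0:ℝ)..t, g τ := by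
    intro t ht
    have hInn : 0 ≤ ∫ τ in (0:ℝ)..t, g τ :=
      intervalIntegral.integral_nonneg ht.1 (fun τ _ => hg0 τ)
    have hBnn : 0 ≤ Real.exp (c*T) * (4*c) * ∫ τ in (0:ℝ)..t, g τ :=
      mul_nonneg (mul_nonneg (Real.exp_pos _).le hL0) hInn
    have hterm : ∀ i : Fin n,
        max (-(s t i)) 0 + max (-(e t i)) 0 + max (-(x t i)) 0 + max (-(r t i)) 0
          ≤ 4 * (Real.exp (c*T) * (4*c) * ∫ τ in (0:ℝ)..t, g τ) := by
      intro i
      have m1 : max (-(s t i)) 0 ≤ Real.exp (c*T) * (4*c) * ∫ τ in (0:ℝ)..t, g τ :=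
        max_le (by linarith [hBs i t ht]) hBnn
      have m2 : max (-(e t i)) 0 ≤ Real.exp (c*T) * (4*c) * ∫ τ in (0:ℝ)..t, g τ :=
        max_le (by linarith [hBe i t ht]) hBnn
      have m3 : max (-(x t i)) 0 ≤ Real.exp (c*T) * (4*c) * ∫ τ in (0:ℝ)..t, g τ :=
        max_le (by linarith [hBx i t ht]) hBnn
      have m4 : max (-(r t i)) 0 ≤ Real.exp (c*T) * (4*c) * ∫ τ in (0:ℝ)..t, g τ :=
        max_le (by linarith [hBr i t ht]) hBnn
      linarith
    calc g t ≤ ∑ _i : Fin n, 4 * (Real.exp (c*T) * (4*c) * ∫ τ in (0:ℝ)..t, g τ) :=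
          Finset.sum_le_sum fun i _ => hterm i
      _ = ((n:ℝ) * (4 * (Real.exp (c*T) * (4*c)))) * ∫ τ in (0:ℝ)..t, g τ := by
          rw [Finset.sum_const, Finset.card_univ, Fintype.card_fin, nsmul_eq_mul]; ring
  have hK0 : (0:ℝ) ≤ (n:ℝ) * (4 * (Real.exp (c*T) * (4*c))) := by positivity
  have hgz : ∀ t ∈ Set.Icc (0:ℝ) T, g t = 0 :=
    gron_int hT hK0 hgc (fun t _ => hg0 t) hgK
  have hTmem : T ∈ Set.Icc (0:ℝ) T := ⟨hT, le_rfl⟩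
  -- nonnegativity at time T
  have hnn : ∀ i, 0 ≤ s T i ∧ 0 ≤ e T i ∧ 0 ≤ x T i ∧ 0 ≤ r T i := by
    intro i
    obtain ⟨hg_s, hg_e, hg_x, hg_r⟩ := hcomp T i
    rw [hgz T hTmem] at hg_s hg_e hg_x hg_r
    exact ⟨by linarith, by linarith, by linarith, by linarith⟩
  -- the sum part
  set v : Fin n → ℝ → ℝ := fun i t => s t i + e t i + x t i + r t i - 1 with hvdef
  set Dv : Fin n → ℝ → ℝ := fun i t => -(γ i * v i t) +
    ∑ j ∈ Finset.univ.erase i, Φ i j * v j t with hDvdef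
  have hvc : ∀ i, ContinuousOn (v i) (Set.Icc 0 T) :=
    fun i => ((((hsc i).add (hec i)).add (hxc i)).add (hrc i)).sub continuousOn_const
  have hvd : ∀ t ≥ (0:ℝ), ∀ i, HasDerivAt (v i) (Dv i t) t := by
    intro t ht i
    have H := ((((hds t ht i).add (hde t ht i)).add (hdx t ht i)).add (hdr t ht i)).sub_const 1
    have hexp : ∀ j : Fin n, Φ i j * v j t
        = Φ i j * s t j + Φ i j * e t j + Φ i j * x t j + Φ i j * r t j - Φ i j := by
      intro j; simp only [hvdef]; ring
    have h1 : ∑ j ∈ Finset.univ.erase i, Φ i j * v j t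
        = (∑ j ∈ Finset.univ.erase i, Φ i j * s t j)
          + (∑ j ∈ Finset.univ.erase i, Φ i j * e t j)
          + (∑ j ∈ Finset.univ.erase i, Φ i j * x t j)
          + (∑ j ∈ Finset.univ.erase i, Φ i j * r t j) - γ i := by
      rw [Finset.sum_congr rfl fun j _ => hexp j]
      rw [Finset.sum_sub_distrib, Finset.sum_add_distrib, Finset.sum_add_distrib,
        Finset.sum_add_distrib, hbal i]
    refine H.congr_deriv ?_
    simp only [hDvdef, hvdef]
    rw [h1]
    ring
  have hDvc : ∀ i, ContinuousOn (fun t => Dv i t) (Set.Icc 0 T) := by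
    intro i
    simp only [hDvdef]
    exact ((continuousOn_const.mul (hvc i)).neg).add
      (contOn_sum _ fun j _ => continuousOn_const.mul (hvc j))
  set h : ℝ → ℝ := fun t => ∑ i : Fin n, |v i t| with hhdef
  have hhc : ContinuousOn h (Set.Icc 0 T) := contOn_sum _ fun i _ => (hvc i).abs
  have hh0 : ∀ t, 0 ≤ h t := fun t => Finset.sum_nonneg fun i _ => abs_nonneg _
  have hvh : ∀ t, ∀ i, |v i t| ≤ h t := fun t i =>
    Finset.single_le_sum (f := fun i => |v i t|) (fun j _ => abs_nonneg _) (Finset.mem_univ i)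
  have hDvb : ∀ i, ∀ t ∈ Set.Icc (0:ℝ) T, |Dv i t| ≤ 2*(c * h t) := by
    intro i t ht
    obtain ⟨hαc, hβMγ, hσγ, hδγ, hγc, hαγ, hσc, hδc, hβMc⟩ := hcoef i
    have hht := hh0 t
    have h1 : |∑ j ∈ Finset.univ.erase i, Φ i j * v j t|
        ≤ ∑ j ∈ Finset.univ.erase i, Φ i j * h t := by
      refine le_trans (Finset.abs_sum_le_sum_abs _ _) (Finset.sum_le_sum fun j _ => ?_)
      rw [abs_mul, abs_of_nonneg (hΦnn i j)]
      exact mul_le_mul_of_nonneg_left (hvh t j) (hΦnn i j)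
    have h2 : ∑ j ∈ Finset.univ.erase i, Φ i j * h t = γ i * h t := by
      rw [← Finset.sum_mul, ← hbal i]
    have h3 : |Dv i t| ≤ |(-(γ i * v i t))| + |∑ j ∈ Finset.univ.erase i, Φ i j * v j t| :=
      abs_add_le _ _
    rw [abs_neg, abs_mul, abs_of_nonneg (hγ i).le] at h3
    have h4 : γ i * |v i t| ≤ c * h t := by
      nlinarith [hvh t i, abs_nonneg (v i t), mul_le_mul_of_nonneg_right hγc hht]
    rw [h2] at h1
    have h5 : γ i * h t ≤ c * h t := mul_le_mul_of_nonneg_right hγc hht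
    linarith
  have hv0 : ∀ i, v i 0 = 0 := by intro i; simp only [hvdef]; rw [hsum0 i]; ring
  have hvlow : ∀ i, ∀ t ∈ Set.Icc (0:ℝ) T,
      -(Real.exp (0*T) * (2*c) * ∫ τ in (0:ℝ)..t, h τ) ≤ v i t := by
    intro i
    exact lower_via_int le_rfl (by linarith) (y := v i) (d := fun t => Dv i t)
      (fun t ht => hvd t ht.1 i) (hDvc i) (hvc i) hhc (fun t _ => hh0 t) (hv0 i).ge
      (fun t ht => by have := hDvb i t ht; have := neg_abs_le (Dv i t); nlinarith)
  have hvhigh : ∀ i, ∀ t ∈ Set.Icc (0:ℝ) T,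
      -(Real.exp (0*T) * (2*c) * ∫ τ in (0:ℝ)..t, h τ) ≤ -(v i t) := by
    intro i
    exact lower_via_int le_rfl (by linarith) (y := fun t => -(v i t)) (d := fun t => -(Dv i t))
      (fun t ht => (hvd t ht.1 i).neg) (hDvc i).neg (hvc i).neg hhc (fun t _ => hh0 t)
      (by show (0:ℝ) ≤ -(v i 0); rw [hv0 i]; norm_num)
      (fun t ht => by
        have := hDvb i t ht; have := le_abs_self (Dv i t); nlinarith)
  have hhK : ∀ t ∈ Set.Icc (0:ℝ) T, h t ≤ ((n:ℝ) * (2*c)) * ∫ τ in (0:ℝ)..t, h τ := by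
    intro t ht
    have hexp0 : Real.exp (0*T) = 1 := by rw [zero_mul, Real.exp_zero]
    have hterm : ∀ i : Fin n, |v i t| ≤ (2*c) * ∫ τ in (0:ℝ)..t, h τ := by
      intro i
      have l1 := hvlow i t ht
      have l2 := hvhigh i t ht
      rw [hexp0, one_mul] at l1 l2
      rw [abs_le]
      exact ⟨by linarith, by linarith⟩
    calc h t ≤ ∑ _i : Fin n, (2*c) * ∫ τ in (0:ℝ)..t, h τ :=
          Finset.sum_le_sum fun i _ => hterm i
      _ = ((n:ℝ) * (2*c)) * ∫ τ in (0:ℝ)..t, h τ := by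
          rw [Finset.sum_const, Finset.card_univ, Fintype.card_fin, nsmul_eq_mul]; ring
  have hhz : ∀ t ∈ Set.Icc (0:ℝ) T, h t = 0 :=
    gron_int hT (by positivity) hhc (fun t _ => hh0 t) hhK
  have hsum1 : ∀ i, s T i + e T i + x T i + r T i = 1 := by
    intro i
    have h1 : |v i T| ≤ 0 := by rw [← hhz T hTmem]; exact hvh T i
    have h2 : v i T = 0 := abs_eq_zero.mp (le_antisymm h1 (abs_nonneg _))
    have h3 : s T i + e T i + x T i + r T i - 1 = 0 := h2
    linarith
  obtain ⟨hs', he', hx', hr'⟩ := hnn i₀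
  have hsum' := hsum1 i₀
  exact ⟨⟨hs', by linarith⟩, ⟨he', by linarith⟩, ⟨hx', by linarith⟩, ⟨hr', by linarith⟩, hsum'⟩
end

section
/- In the networked SEIRS model with travel flows, assume the flow balance condition γ_i = Σ_{j≠i} Φ_{ij} holds for every i and all parameters α_i, β_i, σ_i, δ_i, γ_i are strictly positive. If the spectral abscissa of the 2n×2n matrix U = [[−Σ−Γ+Φ, B],[Σ, −D−Γ+Φ]] satisfies s(U) < 0, then the spectral abscissa of the 3n×3n Jacobian J = [[−Σ−Γ+Φ, B, 0],[Σ, −D−Γ+Φ, 0],[0, D, −A−Γ+Φ]] of the (e,x,r)-dynamics at the healthy state satisfies s(J) < 0 (so the healthy state is locally exponentially stable). -/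
open Finset Matrix

/-- The spectral abscissa of a real square matrix: the maximum real part of its
complex eigenvalues. -/
noncomputable def spectralAbscissa {m : Type*} [Fintype m] [DecidableEq m]
    (M : Matrix m m ℝ) : ℝ :=
  sSup (Complex.re '' spectrum ℂ (M.map Complex.ofReal))

/-- A square block matrix assembled from a `k × k` array of `n × n` blocks. -/
def blockMat {k n : ℕ} (Bl : Fin k → Fin k → Matrix (Fin n) (Fin n) ℝ) :
    Matrix (Fin k × Fin n) (Fin k × Fin n) ℝ :=
  Matrix.of fun p q => Bl p.1 q.1 p.2 q.2

namespace SEIRSaux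

open Matrix Finset

lemma mem_spec_iff_det {m : Type*} [Fintype m] [DecidableEq m] (M : Matrix m m ℂ) (z : ℂ) :
    z ∈ spectrum ℂ M ↔ (z • (1 : Matrix m m ℂ) - M).det = 0 := by
  rw [spectrum.mem_iff, Matrix.isUnit_iff_isUnit_det, isUnit_iff_ne_zero, not_ne_iff,
    Algebra.algebraMap_eq_smul_one]

lemma spec_nonempty {m : Type*} [Fintype m] [DecidableEq m] [Nonempty m]
    (M : Matrix m m ℂ) : (spectrum ℂ M).Nonempty := by
  obtain ⟨c, hc⟩ := Module.End.exists_eigenvalue (Matrix.toLinAlgEquiv' M)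
  exact ⟨c, by rw [← AlgEquiv.spectrum_eq (Matrix.toLinAlgEquiv' (R := ℂ) (n := m)) M]
               exact hc.mem_spectrum⟩

lemma hasEig_of_mem_spec {m : Type*} [Fintype m] [DecidableEq m]
    (M : Matrix m m ℂ) {z : ℂ} (h : z ∈ spectrum ℂ M) :
    Module.End.HasEigenvalue (Matrix.toLin' M) z := by
  rw [Module.End.hasEigenvalue_iff_mem_spectrum]
  rwa [← AlgEquiv.spectrum_eq (Matrix.toLinAlgEquiv' (R := ℂ) (n := m)) M] at h

def splitE (n : ℕ) : (Fin 2 × Fin n) ⊕ Fin n ≃ Fin 3 × Fin n where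
  toFun := Sum.elim (fun p => (⟨p.1.1, by omega⟩, p.2)) (fun i => (2, i))
  invFun p := if h : (p.1 : ℕ) < 2 then Sum.inl (⟨p.1, h⟩, p.2) else Sum.inr p.2
  left_inv := by
    rintro (⟨k, i⟩ | i)
    · simp only [Sum.elim_inl]
      exact dif_pos k.2
    · simp only [Sum.elim_inr]
      exact dif_neg (by decide)
  right_inv := by
    rintro ⟨k, i⟩
    dsimp only
    by_cases h : (k : ℕ) < 2
    · rw [dif_pos h]
      exact Prod.ext (Fin.ext rfl) rfl
    · rw [dif_neg h]
      have hk := k.2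
      exact Prod.ext (Fin.ext (by simp only [Sum.elim_inr]; omega)) rfl

lemma block_decomp {n : ℕ} (A1 A2 A3 A4 A5 A6 : Matrix (Fin n) (Fin n) ℝ) :
    ((blockMat ![![A1, A2, 0], ![A3, A4, 0], ![0, A5, A6]]).map
        (Complex.ofReal)).submatrix (splitE n) (splitE n) =
      Matrix.fromBlocks ((blockMat ![![A1, A2], ![A3, A4]]).map Complex.ofReal) 0
        (Matrix.of fun i p =>
          ((blockMat ![![A1, A2, 0], ![A3, A4, 0], ![0, A5, A6]]).map Complex.ofReal)
            ((2 : Fin 3), i) ((splitE n) (Sum.inl p)))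
        (A6.map Complex.ofReal) := by
  ext p q
  rcases p with ⟨k, i⟩ | i <;> rcases q with ⟨l, j⟩ | j
  · fin_cases k <;> fin_cases l <;> rfl
  · fin_cases k <;> simp [splitE, blockMat, Matrix.fromBlocks]
  · rfl
  · rfl

lemma det_factor {n : ℕ} (A1 A2 A3 A4 A5 A6 : Matrix (Fin n) (Fin n) ℝ) (z : ℂ) :
    (z • (1 : Matrix (Fin 3 × Fin n) (Fin 3 × Fin n) ℂ) -
        (blockMat ![![A1, A2, 0], ![A3, A4, 0], ![0, A5, A6]]).map Complex.ofReal).det =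
      (z • (1 : Matrix (Fin 2 × Fin n) (Fin 2 × Fin n) ℂ) -
          (blockMat ![![A1, A2], ![A3, A4]]).map Complex.ofReal).det *
        (z • (1 : Matrix (Fin n) (Fin n) ℂ) - A6.map Complex.ofReal).det := by
  set Jm := (blockMat ![![A1, A2, 0], ![A3, A4, 0], ![0, A5, A6]]).map Complex.ofReal
  set Um := (blockMat ![![A1, A2], ![A3, A4]]).map Complex.ofReal
  set Vm := A6.map Complex.ofReal
  set C := (Matrix.of fun i p => Jm ((2 : Fin 3), i) ((splitE n) (Sum.inl p)))
  rw [← Matrix.det_submatrix_equiv_self (splitE n)]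
  have h1 : (z • (1 : Matrix (Fin 3 × Fin n) (Fin 3 × Fin n) ℂ) - Jm).submatrix
      (splitE n) (splitE n)
      = z • (1 : Matrix ((Fin 2 × Fin n) ⊕ Fin n) ((Fin 2 × Fin n) ⊕ Fin n) ℂ) -
        Jm.submatrix (splitE n) (splitE n) := by
    ext p q
    simp [Matrix.one_apply, (splitE n).injective.eq_iff]
  rw [h1, block_decomp]
  have h2 : z • (1 : Matrix ((Fin 2 × Fin n) ⊕ Fin n) ((Fin 2 × Fin n) ⊕ Fin n) ℂ) -
      Matrix.fromBlocks Um 0 C Vm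
      = Matrix.fromBlocks (z • 1 - Um) 0 (-C) (z • 1 - Vm) := by
    rw [← Matrix.fromBlocks_one, Matrix.fromBlocks_smul, sub_eq_add_neg,
      Matrix.fromBlocks_neg, Matrix.fromBlocks_add]
    congr 1 <;> simp [sub_eq_add_neg]
  rw [h2, Matrix.det_fromBlocks_zero₁₂]

end SEIRSaux


/-- **Proposition (local exponential stability of the healthy state).**
If `s(U) < 0` for the upper `2n × 2n` block `U`, then the spectral abscissa of the full
Jacobian `J` of the `(e,x,r)`-dynamics at the healthy state is negative. -/
theorem healthy_state_locally_stable
    {n : ℕ} (hn : 1 ≤ n)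
    (N α β σ δ γ : Fin n → ℝ) (w : Fin n → Fin n → ℝ)
    (hN : ∀ i, 0 < N i) (hα : ∀ i, 0 < α i) (hβ : ∀ i, 0 < β i)
    (hσ : ∀ i, 0 < σ i) (hδ : ∀ i, 0 < δ i) (hγ : ∀ i, 0 < γ i)
    (hwdiag : ∀ i, w i i = 0) (hwnn : ∀ i j, 0 ≤ w i j)
    (hwsum : ∀ j, ∑ i ∈ Finset.univ.erase j, w i j = 1)
    (Φm : Matrix (Fin n) (Fin n) ℝ)
    (hΦ : ∀ i j, Φm i j = if i = j then 0 else (N j / N i) * w i j * γ j)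
    (hbal : ∀ i, γ i = ∑ j ∈ Finset.univ.erase i, Φm i j)
    (U : Matrix (Fin 2 × Fin n) (Fin 2 × Fin n) ℝ)
    (hU : U = blockMat
      ![![-(Matrix.diagonal σ) - Matrix.diagonal γ + Φm, Matrix.diagonal β],
        ![Matrix.diagonal σ, -(Matrix.diagonal δ) - Matrix.diagonal γ + Φm]])
    (J : Matrix (Fin 3 × Fin n) (Fin 3 × Fin n) ℝ)
    (hJ : J = blockMat
      ![![-(Matrix.diagonal σ) - Matrix.diagonal γ + Φm, Matrix.diagonal β, 0],
        ![Matrix.diagonal σ, -(Matrix.diagonal δ) - Matrix.diagonal γ + Φm, 0],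
        ![0, Matrix.diagonal δ, -(Matrix.diagonal α) - Matrix.diagonal γ + Φm]])
    (hsU : spectralAbscissa U < 0) :
    spectralAbscissa J < 0 := by
  have hnem : Nonempty (Fin n) := ⟨⟨0, hn⟩⟩
  have hune : (Finset.univ : Finset (Fin n)).Nonempty := Finset.univ_nonempty
  set V := -(Matrix.diagonal α) - Matrix.diagonal γ + Φm with hV
  have hΦnn : ∀ i j, 0 ≤ Φm i j := by
    intro i j
    rw [hΦ]
    split
    · exact le_refl 0
    · exact mul_nonneg (mul_nonneg (div_nonneg (hN j).le (hN i).le) (hwnn i j)) (hγ j).le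
  have hΦdiag : ∀ i, Φm i i = 0 := fun i => by rw [hΦ]; simp
  have hVdiag : ∀ k, V k k = -(α k) - γ k := by
    intro k
    simp [hV, Matrix.sub_apply, Matrix.add_apply, Matrix.neg_apply,
      Matrix.diagonal_apply_eq, hΦdiag k]
  have hVoff : ∀ k j, j ≠ k → V k j = Φm k j := by
    intro k j hjk
    simp [hV, Matrix.sub_apply, Matrix.add_apply, Matrix.neg_apply,
      Matrix.diagonal_apply_ne _ (Ne.symm hjk)]
  have hsplit : ∀ z ∈ spectrum ℂ (J.map Complex.ofReal),
      z ∈ spectrum ℂ (U.map Complex.ofReal) ∨ z ∈ spectrum ℂ (V.map Complex.ofReal) := by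
    intro z hz
    rw [SEIRSaux.mem_spec_iff_det] at hz
    rw [hJ, SEIRSaux.det_factor] at hz
    rcases mul_eq_zero.mp hz with h | h
    · left
      rw [SEIRSaux.mem_spec_iff_det, hU]
      exact h
    · right
      rw [SEIRSaux.mem_spec_iff_det]
      exact h
  have hVbound : ∀ z ∈ spectrum ℂ (V.map Complex.ofReal),
      z.re ≤ -(Finset.univ.inf' hune α) := by
    intro z hz
    obtain ⟨k, hk⟩ := eigenvalue_mem_ball (SEIRSaux.hasEig_of_mem_spec _ hz)
    rw [Metric.mem_closedBall, Complex.dist_eq] at hk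
    have hsum : ∑ j ∈ Finset.univ.erase k, ‖(V.map Complex.ofReal) k j‖ = γ k := by
      rw [hbal k]
      refine Finset.sum_congr rfl fun j hj => ?_
      have hjk : j ≠ k := Finset.ne_of_mem_erase hj
      rw [Matrix.map_apply, hVoff k j hjk, Complex.norm_real, Real.norm_eq_abs,
        abs_of_nonneg (hΦnn k j)]
    have hdd : (V.map Complex.ofReal) k k = Complex.ofReal (-(α k) - γ k) := by
      rw [Matrix.map_apply, hVdiag k]
    rw [hsum, hdd] at hk
    have h1 : (z - Complex.ofReal (-(α k) - γ k)).re ≤ γ k :=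
      le_trans (Complex.re_le_norm _) hk
    rw [Complex.sub_re, Complex.ofReal_re] at h1
    have h3 : Finset.univ.inf' hune α ≤ α k := Finset.inf'_le _ (Finset.mem_univ k)
    linarith
  have hJne : (Complex.re '' spectrum ℂ (J.map Complex.ofReal)).Nonempty := by
    have : Nonempty (Fin 3 × Fin n) := ⟨(0, ⟨0, hn⟩)⟩
    exact (SEIRSaux.spec_nonempty _).image _
  have hUbdd : BddAbove (Complex.re '' spectrum ℂ (U.map Complex.ofReal)) :=
    ((Matrix.finite_spectrum _).image _).bddAbove
  have hc2 : 0 < Finset.univ.inf' hune α := by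
    rw [Finset.lt_inf'_iff]
    exact fun i _ => hα i
  refine lt_of_le_of_lt (csSup_le hJne ?_) (max_lt hsU (neg_lt_zero.mpr hc2))
  rintro x ⟨z, hz, rfl⟩
  rcases hsplit z hz with h | h
  · exact le_trans (le_csSup hUbdd ⟨z, h, rfl⟩) (le_max_left _ _)
  · exact le_trans (hVbound z h) (le_max_right _ _)
end

section
/- Consider the networked SEIRS model with travel flows, with all parameters α_i, β_i, σ_i, δ_i > 0. Suppose the directed graph on the n nodes with an edge from j to i whenever Φ_{ij} > 0 is strongly connected, and suppose x_i > 0 for at least one node i. Then the 4n×4n nonnegative matrix M = [[Φ, 0, 0, A],[B·diag(x_i), Φ, 0, 0],[0, Σ, Φ, 0],[0, 0, D, Φ]] is irreducible. -/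
open Finset Matrix

/-- A nonnegative square matrix `P` is irreducible if for every pair of indices `i ≠ j`
there is a finite chain `i = k_0, k_1, …, k_m = j` with `P (k_{l+1}) (k_l) > 0`. -/
def MatIrreducible {m : Type*} (P : Matrix m m ℝ) : Prop :=
  ∀ i j : m, i ≠ j → Relation.TransGen (fun a b => P b a > 0) i j

/-- **Lemma (irreducibility of `M`).**
If the flow graph (edge from `j` to `i` whenever `Φ_{ij} > 0`) is strongly connected and
some node has a positive infected proportion, then the `4n × 4n` nonnegative matrix
`M = [[Φ,0,0,A],[B·diag(x),Φ,0,0],[0,Σ,Φ,0],[0,0,D,Φ]]` is irreducible. -/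
theorem seirs_flow_matrix_irreducible
    {n : ℕ} (hn : 1 ≤ n)
    (N α β σ δ γ : Fin n → ℝ) (w : Fin n → Fin n → ℝ)
    (hN : ∀ i, 0 < N i) (hα : ∀ i, 0 < α i) (hβ : ∀ i, 0 < β i)
    (hσ : ∀ i, 0 < σ i) (hδ : ∀ i, 0 < δ i) (hγ : ∀ i, 0 < γ i)
    (hwdiag : ∀ i, w i i = 0) (hwnn : ∀ i j, 0 ≤ w i j)
    (hwsum : ∀ j, ∑ i ∈ Finset.univ.erase j, w i j = 1)
    (Φm : Matrix (Fin n) (Fin n) ℝ)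
    (hΦ : ∀ i j, Φm i j = if i = j then 0 else (N j / N i) * w i j * γ j)
    (hconn : ∀ a b : Fin n, a ≠ b → Relation.TransGen (fun u v => Φm v u > 0) a b)
    (x : Fin n → ℝ) (hxnn : ∀ i, 0 ≤ x i) (hxpos : ∃ i, 0 < x i)
    (M : Matrix (Fin 4 × Fin n) (Fin 4 × Fin n) ℝ)
    (hM : M = blockMat
      ![![Φm, 0, 0, Matrix.diagonal α],
        ![Matrix.diagonal (fun i => β i * x i), Φm, 0, 0],
        ![0, Matrix.diagonal σ, Φm, 0],
        ![0, 0, Matrix.diagonal δ, Φm]]) :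
    MatIrreducible M := by
  obtain ⟨i0, hx0⟩ := hxpos
  subst hM
  set Bl : Fin 4 → Fin 4 → Matrix (Fin n) (Fin n) ℝ :=
    ![![Φm, 0, 0, Matrix.diagonal α],
      ![Matrix.diagonal (fun i => β i * x i), Φm, 0, 0],
      ![0, Matrix.diagonal σ, Φm, 0],
      ![0, 0, Matrix.diagonal δ, Φm]] with hBl
  set R : (Fin 4 × Fin n) → (Fin 4 × Fin n) → Prop :=
    fun p q => blockMat Bl q p > 0 with hR
  have move : ∀ (k : Fin 4) (a b : Fin n), Relation.ReflTransGen R (k, a) (k, b) := by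
    intro k a b
    rcases eq_or_ne a b with h | h
    · exact h ▸ Relation.ReflTransGen.refl
    · refine (Relation.TransGen.lift (fun i => (k, i)) ?_ _ _ (hconn a b h)).to_reflTransGen
      intro u v huv
      show blockMat Bl (k, v) (k, u) > 0
      have hkk : Bl k k = Φm := by fin_cases k <;> rfl
      simpa [blockMat, hkk] using huv
  have s01 : R (0, i0) (1, i0) := by
    show blockMat Bl (1, i0) (0, i0) > 0
    simp [blockMat, hBl, Matrix.diagonal_apply_eq]
    exact mul_pos (hβ i0) hx0
  have s12 : ∀ i, R (1, i) (2, i) := by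
    intro i
    show blockMat Bl (2, i) (1, i) > 0
    simp [blockMat, hBl, Matrix.diagonal_apply_eq]
    exact hσ i
  have s23 : ∀ i, R (2, i) (3, i) := by
    intro i
    show blockMat Bl (3, i) (2, i) > 0
    simp [blockMat, hBl, Matrix.diagonal_apply_eq]
    exact hδ i
  have s30 : ∀ i, R (3, i) (0, i) := by
    intro i
    show blockMat Bl (0, i) (3, i) > 0
    simp [blockMat, hBl, Matrix.diagonal_apply_eq]
    exact hα i
  have cycle : Relation.TransGen R (0, i0) (0, i0) :=
    (((Relation.TransGen.single s01).tail (s12 i0)).tail (s23 i0)).tail (s30 i0)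
  have to0 : ∀ (k : Fin 4) (a : Fin n), Relation.TransGen R (k, a) ((0 : Fin 4), i0) := by
    intro k a
    fin_cases k
    · exact Relation.TransGen.trans_right (move 0 a i0) cycle
    · exact ((((Relation.TransGen.single (s12 a)).tail (s23 a)).tail (s30 a)).trans_left
        (move 0 a i0))
    · exact (((Relation.TransGen.single (s23 a)).tail (s30 a)).trans_left (move 0 a i0))
    · exact ((Relation.TransGen.single (s30 a)).trans_left (move 0 a i0))
  have from0 : ∀ (k : Fin 4) (b : Fin n), Relation.TransGen R ((0 : Fin 4), i0) (k, b) := by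
    intro k b
    fin_cases k
    · exact cycle.trans_left (move 0 i0 b)
    · exact (Relation.TransGen.single s01).trans_left (move 1 i0 b)
    · exact (((Relation.TransGen.single s01).trans_left (move 1 i0 b)).tail (s12 b))
    · exact ((((Relation.TransGen.single s01).trans_left (move 1 i0 b)).tail (s12 b)).tail
        (s23 b))
  intro p q _
  have := (to0 p.1 p.2).trans (from0 q.1 q.2)
  simpa using this
end

section
/- Let Λ ∈ ℝ^{n×n} be a diagonal matrix with all diagonal entries strictly negative, let N ∈ ℝ^{n×n} be an irreducible nonnegative matrix, and set M = Λ + N. Then: s(M) < 0 if and only if ρ(−Λ^{−1}N) < 1; s(M) = 0 if and only if ρ(−Λ^{−1}N) = 1; and s(M) > 0 if and only if ρ(−Λ^{−1}N) > 1. -/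
open Finset Matrix

/-- The spectral radius of a real square matrix: the maximum modulus of its complex
eigenvalues. -/
noncomputable def spectralRad {m : Type*} [Fintype m] [DecidableEq m]
    (M : Matrix m m ℝ) : ℝ :=
  sSup ((fun μ => ‖μ‖) '' spectrum ℂ (M.map Complex.ofReal))

namespace PFaux

open Filter Topology ENNReal NNReal

variable {n : ℕ}

attribute [local instance] Matrix.linftyOpNormedAddCommGroup Matrix.linftyOpNormedSpace
  Matrix.linftyOpNormedRing Matrix.linftyOpNormedAlgebra

noncomputable local instance : CompleteSpace (Matrix (Fin n) (Fin n) ℂ) :=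
  FiniteDimensional.complete ℂ _

lemma mem_spectrum_iff (C : Matrix (Fin n) (Fin n) ℂ) (μ : ℂ) :
    μ ∈ spectrum ℂ C ↔ ∃ x : Fin n → ℂ, x ≠ 0 ∧ C *ᵥ x = μ • x := by
  rw [spectrum.mem_iff, Matrix.isUnit_iff_isUnit_det, isUnit_iff_ne_zero, not_ne_iff,
    ← Matrix.exists_mulVec_eq_zero_iff]
  have key : ∀ x : Fin n → ℂ, ((algebraMap ℂ (Matrix (Fin n) (Fin n) ℂ)) μ - C) *ᵥ x
      = μ • x - C *ᵥ x := by
    intro x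
    rw [Matrix.sub_mulVec]
    congr 1
    ext i
    simp [Matrix.algebraMap_eq_diagonal, Matrix.mulVec_diagonal]
  constructor
  · rintro ⟨x, hx, h⟩
    exact ⟨x, hx, by rw [key] at h; exact (sub_eq_zero.mp h).symm⟩
  · rintro ⟨x, hx, h⟩
    exact ⟨x, hx, by rw [key, h, sub_self]⟩

lemma nontrivial_matrix (hn : 0 < n) : Nontrivial (Matrix (Fin n) (Fin n) ℂ) := by
  refine ⟨0, 1, fun h => ?_⟩
  have := congrFun (congrFun h ⟨0, hn⟩) ⟨0, hn⟩
  simp [Matrix.one_apply] at this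

lemma spectrum_nonempty (hn : 0 < n) (C : Matrix (Fin n) (Fin n) ℂ) :
    (spectrum ℂ C).Nonempty := by
  haveI := nontrivial_matrix hn
  exact spectrum.nonempty C

/-- attainment of the spectral radius -/
lemma exists_abs_eq_spectralRad (hn : 0 < n) (A : Matrix (Fin n) (Fin n) ℝ) :
    ∃ μ ∈ spectrum ℂ (A.map Complex.ofReal), ‖μ‖ = spectralRad A := by
  have hK : IsCompact ((fun μ => ‖μ‖) '' spectrum ℂ (A.map Complex.ofReal)) :=
    (spectrum.isCompact _).image continuous_norm
  have hne : ((fun μ => ‖μ‖) '' spectrum ℂ (A.map Complex.ofReal)).Nonempty :=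
    (spectrum_nonempty hn _).image _
  have := hK.sSup_mem hne
  obtain ⟨μ, hμ, h⟩ := this
  exact ⟨μ, hμ, h⟩

lemma abs_le_spectralRad (A : Matrix (Fin n) (Fin n) ℝ) {μ : ℂ}
    (hμ : μ ∈ spectrum ℂ (A.map Complex.ofReal)) : ‖μ‖ ≤ spectralRad A :=
  le_csSup ((spectrum.isCompact _).image continuous_norm).bddAbove ⟨μ, hμ, rfl⟩

lemma re_le_spectralAbscissa (A : Matrix (Fin n) (Fin n) ℝ) {μ : ℂ}
    (hμ : μ ∈ spectrum ℂ (A.map Complex.ofReal)) : μ.re ≤ spectralAbscissa A :=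
  le_csSup ((spectrum.isCompact _).image Complex.continuous_re).bddAbove ⟨μ, hμ, rfl⟩

lemma spectralAbscissa_le (hn : 0 < n) (A : Matrix (Fin n) (Fin n) ℝ) {c : ℝ}
    (h : ∀ μ ∈ spectrum ℂ (A.map Complex.ofReal), μ.re ≤ c) : spectralAbscissa A ≤ c :=
  csSup_le ((spectrum_nonempty hn _).image _) (by rintro x ⟨μ, hμ, rfl⟩; exact h μ hμ)

lemma spectralRad_nonneg (hn : 0 < n) (A : Matrix (Fin n) (Fin n) ℝ) :
    0 ≤ spectralRad A := by
  obtain ⟨μ, hμ, h⟩ := exists_abs_eq_spectralRad hn A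
  rw [← h]; positivity

/-- real eigenpair gives complex spectrum membership -/
lemma real_eig_mem_spectrum (A : Matrix (Fin n) (Fin n) ℝ) (t : ℝ) (v : Fin n → ℝ)
    (hv : v ≠ 0) (h : A *ᵥ v = t • v) :
    (t : ℂ) ∈ spectrum ℂ (A.map Complex.ofReal) := by
  rw [spectrum.mem_iff, Matrix.isUnit_iff_isUnit_det, isUnit_iff_ne_zero, not_ne_iff,
    ← Matrix.exists_mulVec_eq_zero_iff]
  refine ⟨fun i => (v i : ℂ), ?_, ?_⟩
  · intro hz
    apply hv
    ext i
    have h0 : (v i : ℂ) = 0 := by simpa using congrFun hz i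
    exact_mod_cast h0
  · ext i
    rw [Matrix.sub_mulVec]
    simp only [Pi.sub_apply, Pi.zero_apply]
    have h1 : ((algebraMap ℂ (Matrix (Fin n) (Fin n) ℂ) t) *ᵥ fun i => (v i : ℂ)) i
        = (t : ℂ) * v i := by
      simp [Matrix.algebraMap_eq_diagonal, Matrix.mulVec_diagonal]
    have h2 : ((A.map Complex.ofReal) *ᵥ fun i => (v i : ℂ)) i = ((A *ᵥ v) i : ℂ) := by
      simp only [Matrix.mulVec, dotProduct, Matrix.map_apply]
      push_cast
      rfl
    have h3 := congrFun h i
    rw [h1, h2, h3]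
    push_cast [Pi.smul_apply, smul_eq_mul]
    ring

/-- entrywise nonnegative -/
def Nn (A : Matrix (Fin n) (Fin n) ℝ) : Prop := ∀ i j, 0 ≤ A i j

lemma Nn.mul {A B : Matrix (Fin n) (Fin n) ℝ} (hA : Nn A) (hB : Nn B) : Nn (A * B) := by
  intro i j
  rw [Matrix.mul_apply]
  exact Finset.sum_nonneg fun k _ => mul_nonneg (hA i k) (hB k j)

lemma Nn.pow {A : Matrix (Fin n) (Fin n) ℝ} (hA : Nn A) (k : ℕ) : Nn (A ^ k) := by
  induction k with
  | zero => intro i j; rw [pow_zero]; by_cases h : i = j <;> simp [Matrix.one_apply, h]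
  | succ k ih => rw [pow_succ]; exact ih.mul hA

lemma mulVec_apply (A : Matrix (Fin n) (Fin n) ℝ) (v : Fin n → ℝ) (i : Fin n) :
    (A *ᵥ v) i = ∑ j, A i j * v j := rfl

lemma Nn.one_add {A : Matrix (Fin n) (Fin n) ℝ} (hA : Nn A) : Nn (1 + A) := fun i j => by
  by_cases h : i = j
  · subst h
    have := hA i i
    simp [Matrix.add_apply, Matrix.one_apply]
    linarith
  · have := hA i j
    simp [Matrix.add_apply, Matrix.one_apply, h]
    linarith

lemma Nn.mulVec_nonneg {A : Matrix (Fin n) (Fin n) ℝ} (hA : Nn A) {v : Fin n → ℝ}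
    (hv : ∀ i, 0 ≤ v i) : ∀ i, 0 ≤ (A *ᵥ v) i := fun i => by
  rw [mulVec_apply]
  exact Finset.sum_nonneg fun j _ => mul_nonneg (hA i j) (hv j)

lemma Nn.mulVec_mono {A : Matrix (Fin n) (Fin n) ℝ} (hA : Nn A) {u v : Fin n → ℝ}
    (huv : ∀ i, u i ≤ v i) : ∀ i, (A *ᵥ u) i ≤ (A *ᵥ v) i := fun i => by
  rw [mulVec_apply, mulVec_apply]
  exact Finset.sum_le_sum fun j _ => mul_le_mul_of_nonneg_left (huv j) (hA i j)

/-- chains give positive powers -/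
lemma pow_pos_of_chain {A : Matrix (Fin n) (Fin n) ℝ} (hA : Nn A) {i j : Fin n}
    (h : Relation.TransGen (fun a b => A b a > 0) i j) : ∃ m, 0 < (A ^ m) j i := by
  induction h with
  | single h => exact ⟨1, by simpa [pow_one] using h⟩
  | tail _ hbc ih =>
    obtain ⟨m, hm⟩ := ih
    rename_i b c _
    refine ⟨m + 1, ?_⟩
    rw [pow_succ', Matrix.mul_apply]
    have : 0 < A c b * (A ^ m) b i := mul_pos hbc hm
    calc (0:ℝ) < A c b * (A ^ m) b i := this
    _ ≤ ∑ k, A c k * (A ^ m) k i :=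
      Finset.single_le_sum (fun k _ => mul_nonneg (hA c k) (hA.pow m k i)) (Finset.mem_univ b)

/-- entrywise, `A ^ m ≤ (1 + A) ^ m` and `1 ≤ (1 + A) ^ m` -/
lemma one_add_pow_nonneg {A : Matrix (Fin n) (Fin n) ℝ} (hA : Nn A) (m : ℕ) :
    Nn ((1 + A) ^ m) := hA.one_add.pow m

lemma le_one_add_pow {A : Matrix (Fin n) (Fin n) ℝ} (hA : Nn A) (m : ℕ) :
    ∀ i j, (A ^ m) i j ≤ ((1 + A) ^ m) i j := by
  have hB : Nn (1 + A) := hA.one_add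
  induction m with
  | zero => intro i j; simp
  | succ m ih =>
    intro i j
    rw [pow_succ, pow_succ, Matrix.mul_apply, Matrix.mul_apply]
    refine Finset.sum_le_sum fun k _ => ?_
    refine mul_le_mul (ih i k) ?_ (hA k j) ((one_add_pow_nonneg hA m) i k)
    by_cases h : k = j <;> simp [Matrix.add_apply, Matrix.one_apply, h, hA k j]

lemma one_le_one_add_pow_diag {A : Matrix (Fin n) (Fin n) ℝ} (hA : Nn A) (m : ℕ) :
    ∀ i, 1 ≤ ((1 + A) ^ m) i i := by
  induction m with
  | zero => intro i; simp
  | succ m ih =>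
    intro i
    rw [pow_succ, Matrix.mul_apply]
    have h1 : (1:ℝ) ≤ ((1 + A) ^ m) i i * (1 + A) i i := by
      have h2 : (1:ℝ) ≤ (1 + A) i i := by simp [Matrix.add_apply, Matrix.one_apply, hA i i]
      nlinarith [ih i]
    refine le_trans h1 (Finset.single_le_sum (f := fun k => ((1 + A) ^ m) i k * (1 + A) k i) (fun k _ => ?_) (Finset.mem_univ i))
    exact mul_nonneg ((one_add_pow_nonneg hA m) i k) (hA.one_add k i)

lemma one_add_pow_mono {A : Matrix (Fin n) (Fin n) ℝ} (hA : Nn A) {m L : ℕ} (h : m ≤ L) :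
    ∀ i j, ((1 + A) ^ m) i j ≤ ((1 + A) ^ L) i j := by
  intro i j
  have hL : (1 + A) ^ L = (1 + A) ^ m * (1 + A) ^ (L - m) := by
    rw [← pow_add]; congr 1; omega
  rw [hL, Matrix.mul_apply]
  have h1 : ((1 + A) ^ m) i j ≤ ((1 + A) ^ m) i j * ((1 + A) ^ (L - m)) j j := by
    nlinarith [one_le_one_add_pow_diag hA (L - m) j, (one_add_pow_nonneg hA m) i j]
  refine le_trans h1 (Finset.single_le_sum (f := fun k => ((1 + A) ^ m) i k * ((1 + A) ^ (L - m)) k j) (fun k _ => ?_) (Finset.mem_univ j))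
  exact mul_nonneg ((one_add_pow_nonneg hA m) i k) ((one_add_pow_nonneg hA _) k j)

/-- key positivity: for irreducible nonneg `A` and `y ≥ 0`, `y ≠ 0`, some power of `1+A`
sends `y` to a strictly positive vector. -/
lemma exists_pow_mulVec_pos {A : Matrix (Fin n) (Fin n) ℝ} (hA : Nn A)
    (hirr : MatIrreducible A) {y : Fin n → ℝ} (hy : ∀ i, 0 ≤ y i) {i0 : Fin n}
    (hy0 : 0 < y i0) : ∃ L, ∀ j, 0 < (((1 + A) ^ L) *ᵥ y) j := by
  have key : ∀ j : Fin n, ∃ m : ℕ, 0 < ((1 + A) ^ m : Matrix (Fin n) (Fin n) ℝ) j i0 := by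
    intro j
    by_cases h : j = i0
    · exact ⟨0, by simp [h]⟩
    · obtain ⟨m, hm⟩ := pow_pos_of_chain hA (hirr i0 j (Ne.symm h))
      exact ⟨m, lt_of_lt_of_le hm (le_one_add_pow hA m j i0)⟩
  choose m hm using key
  refine ⟨Finset.univ.sup m, fun j => ?_⟩
  rw [mulVec_apply]
  have hpos : 0 < ((1 + A) ^ Finset.univ.sup m) j i0 :=
    lt_of_lt_of_le (hm j) (one_add_pow_mono hA (Finset.le_sup (Finset.mem_univ j)) j i0)
  have h1 : (0:ℝ) < ((1 + A) ^ Finset.univ.sup m) j i0 * y i0 := mul_pos hpos hy0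
  refine lt_of_lt_of_le h1 (Finset.single_le_sum (f := fun k => ((1 + A) ^ Finset.univ.sup m) j k * y k) (fun k _ => ?_) (Finset.mem_univ i0))
  exact mul_nonneg ((one_add_pow_nonneg hA _) j k) (hy k)

/-- `(1+A)^L *ᵥ z` dominates `z` for `z ≥ 0`. -/
lemma le_pow_mulVec {A : Matrix (Fin n) (Fin n) ℝ} (hA : Nn A) (L : ℕ) {z : Fin n → ℝ}
    (hz : ∀ i, 0 ≤ z i) : ∀ j, z j ≤ (((1 + A) ^ L) *ᵥ z) j := by
  intro j
  rw [mulVec_apply]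
  have h1 : z j ≤ ((1 + A) ^ L) j j * z j := by
    nlinarith [one_le_one_add_pow_diag hA L j, hz j]
  refine le_trans h1 (Finset.single_le_sum (f := fun k => ((1 + A) ^ L) j k * z k) (fun k _ => ?_) (Finset.mem_univ j))
  exact mul_nonneg ((one_add_pow_nonneg hA L) j k) (hz k)

lemma mulVecC_apply (A : Matrix (Fin n) (Fin n) ℂ) (v : Fin n → ℂ) (i : Fin n) :
    (A *ᵥ v) i = ∑ j, A i j * v j := rfl

/-- Upper Collatz–Wielandt bound for matrices with nonnegative off-diagonal entries. -/
lemma upper_CW {M : Matrix (Fin n) (Fin n) ℝ} (hoff : ∀ i j, i ≠ j → 0 ≤ M i j)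
    {v : Fin n → ℝ} (hv : ∀ i, 0 < v i) {c : ℝ} (hMv : ∀ i, (M *ᵥ v) i ≤ c * v i)
    {μ : ℂ} {x : Fin n → ℂ} (hx : x ≠ 0) (hμx : (M.map Complex.ofReal) *ᵥ x = μ • x) :
    μ.re ≤ c := by
  obtain ⟨k, hk⟩ := Function.ne_iff.mp hx
  have hkabs : 0 < ‖x k‖ / v k := div_pos (by simpa using hk) (hv k)
  have hvne : (Finset.univ : Finset (Fin n)).Nonempty := ⟨k, Finset.mem_univ k⟩
  obtain ⟨i0, -, hmax⟩ := Finset.exists_max_image Finset.univ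
    (fun i => ‖x i‖ / v i) hvne
  set t := ‖x i0‖ / v i0 with ht
  have htpos : 0 < t := lt_of_lt_of_le hkabs (hmax k (Finset.mem_univ k))
  have hbound : ∀ j, ‖x j‖ ≤ t * v j := by
    intro j
    have := hmax j (Finset.mem_univ j)
    rw [div_le_iff₀ (hv j)] at this
    linarith [this]
  have hxi0 : ‖x i0‖ = t * v i0 := by
    rw [ht, div_mul_cancel₀]
    exact ne_of_gt (hv i0)
  -- eigen-equation at i0
  have heq : (μ - (M i0 i0 : ℂ)) * x i0 = ∑ j ∈ Finset.univ.erase i0, (M i0 j : ℂ) * x j := by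
    have h1 := congrFun hμx i0
    rw [mulVecC_apply] at h1
    simp only [Matrix.map_apply] at h1
    have h2 : ∑ j ∈ Finset.univ.erase i0, (M i0 j : ℂ) * x j
        = (∑ j, (M i0 j : ℂ) * x j) - (M i0 i0 : ℂ) * x i0 := by
      rw [← Finset.sum_erase_add Finset.univ _ (Finset.mem_univ i0)]
      ring
    rw [h2, h1]
    simp only [Pi.smul_apply, smul_eq_mul]
    ring
  have habs : ‖μ - (M i0 i0 : ℂ)‖ * (t * v i0) ≤ (c - M i0 i0) * (t * v i0) := by
    have h3 : ‖(μ - (M i0 i0 : ℂ)) * x i0‖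
        ≤ ∑ j ∈ Finset.univ.erase i0, M i0 j * (t * v j) := by
      rw [heq]
      refine le_trans (norm_sum_le _ _) (Finset.sum_le_sum fun j hj => ?_)
      have hj' : j ≠ i0 := Finset.ne_of_mem_erase hj
      have hMij : 0 ≤ M i0 j := hoff i0 j (Ne.symm hj')
      rw [norm_mul, Complex.norm_real, Real.norm_eq_abs, abs_of_nonneg hMij]
      exact mul_le_mul_of_nonneg_left (hbound j) hMij
    have h4 : ∑ j ∈ Finset.univ.erase i0, M i0 j * (t * v j)
        = t * ((M *ᵥ v) i0 - M i0 i0 * v i0) := by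
      rw [mulVec_apply, ← Finset.sum_erase_add Finset.univ _ (Finset.mem_univ i0),
        add_sub_cancel_right, Finset.mul_sum]
      exact Finset.sum_congr rfl fun j _ => by ring
    have h5 : t * ((M *ᵥ v) i0 - M i0 i0 * v i0) ≤ (c - M i0 i0) * (t * v i0) := by
      have := hMv i0
      nlinarith [htpos]
    rw [norm_mul, hxi0] at h3
    linarith
  have h6 : ‖μ - (M i0 i0 : ℂ)‖ ≤ c - M i0 i0 := by
    have hpos : 0 < t * v i0 := mul_pos htpos (hv i0)
    exact le_of_mul_le_mul_right habs hpos
  have h7 : μ.re - M i0 i0 ≤ ‖μ - (M i0 i0 : ℂ)‖ := by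
    have := Complex.re_le_norm (μ - (M i0 i0 : ℂ))
    simpa using this
  linarith

lemma ofReal_map_pow (A : Matrix (Fin n) (Fin n) ℝ) (k : ℕ) :
    (A.map Complex.ofReal) ^ k = (A ^ k).map Complex.ofReal := by
  induction k with
  | zero =>
      ext i j
      by_cases h : i = j <;> simp [Matrix.one_apply, h, Matrix.map_apply]
  | succ k ih =>
      rw [pow_succ, pow_succ, ih]
      ext i j
      rw [Matrix.mul_apply, Matrix.map_apply, Matrix.mul_apply]
      push_cast
      simp [Matrix.map_apply]

lemma row_sum_le_norm (B : Matrix (Fin n) (Fin n) ℂ) (i : Fin n) :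
    ∑ j, ‖B i j‖ ≤ ‖B‖ := by
  rw [Matrix.linfty_opNorm_def]
  have h1 : ((∑ j, ‖B i j‖₊ : NNReal) : ℝ)
      ≤ ((Finset.univ.sup fun i => ∑ j, ‖B i j‖₊ : NNReal) : ℝ) :=
    NNReal.coe_le_coe.mpr (Finset.le_sup (f := fun i => ∑ j, ‖B i j‖₊) (Finset.mem_univ i))
  refine le_trans (le_of_eq ?_) h1
  push_cast
  exact Finset.sum_congr rfl fun j _ => rfl

/-- Lower Collatz–Wielandt bound, via Gelfand's formula. -/
lemma lower_CW {A : Matrix (Fin n) (Fin n) ℝ} (hA : Nn A) {u : Fin n → ℝ}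
    (hu : ∀ i, 0 < u i) {c : ℝ} (hc : 0 < c) (hcu : ∀ i, c * u i ≤ (A *ᵥ u) i)
    (hρ0 : 0 ≤ spectralRad A) (hn : 0 < n) : c ≤ spectralRad A := by
  -- iterate the inequality
  have hiter : ∀ k : ℕ, ∀ i, c ^ k * u i ≤ ((A ^ k) *ᵥ u) i := by
    intro k
    induction k with
    | zero => intro i; simp [Matrix.one_mulVec]
    | succ k ih =>
        intro i
        have h1 : ∀ i, (A *ᵥ fun j => c ^ k * u j) i ≤ (A *ᵥ ((A ^ k) *ᵥ u)) i :=
          hA.mulVec_mono ih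
        have h2 : (A *ᵥ fun j => c ^ k * u j) i = c ^ k * (A *ᵥ u) i := by
          rw [mulVec_apply, mulVec_apply, Finset.mul_sum]
          exact Finset.sum_congr rfl fun j _ => by ring
        have h3 : (A *ᵥ ((A ^ k) *ᵥ u)) i = ((A ^ (k + 1)) *ᵥ u) i := by
          rw [pow_succ', Matrix.mulVec_mulVec]
        have h4 := hcu i
        have h5 := h1 i
        rw [h2, h3] at h5
        have : c ^ (k+1) * u i = c ^ k * (c * u i) := by ring
        rw [this]
        calc c ^ k * (c * u i) ≤ c ^ k * (A *ᵥ u) i :=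
          mul_le_mul_of_nonneg_left h4 (by positivity)
        _ ≤ ((A ^ (k + 1)) *ᵥ u) i := h5
  -- norm lower bound
  set i0 : Fin n := ⟨0, hn⟩
  obtain ⟨imax, -, hmax⟩ := Finset.exists_max_image Finset.univ u ⟨i0, Finset.mem_univ i0⟩
  set β : ℝ := u i0 / u imax with hβdef
  have hβ : 0 < β := div_pos (hu i0) (hu imax)
  have hnorm : ∀ k : ℕ, c ^ k * β ≤ ‖(A.map Complex.ofReal) ^ k‖ := by
    intro k
    rw [ofReal_map_pow]
    have h1 : c ^ k * u i0 ≤ ∑ j, (A ^ k) i0 j * u j := by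
      rw [← mulVec_apply]; exact hiter k i0
    have h2 : ∑ j, (A ^ k) i0 j * u j ≤ (∑ j, (A ^ k) i0 j) * u imax := by
      rw [Finset.sum_mul]
      exact Finset.sum_le_sum fun j _ =>
        mul_le_mul_of_nonneg_left (hmax j (Finset.mem_univ j)) (hA.pow k i0 j)
    have h3 : ∑ j, (A ^ k) i0 j = ∑ j, ‖((A ^ k).map Complex.ofReal) i0 j‖ := by
      refine Finset.sum_congr rfl fun j _ => ?_
      rw [Matrix.map_apply, Complex.norm_real, Real.norm_eq_abs, abs_of_nonneg (hA.pow k i0 j)]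
    have h4 := row_sum_le_norm ((A ^ k).map Complex.ofReal) i0
    have humax : 0 < u imax := hu imax
    have h5 : (∑ j, (A ^ k) i0 j) * u imax ≤ ‖(A ^ k).map Complex.ofReal‖ * u imax :=
      mul_le_mul_of_nonneg_right (h3 ▸ h4) (le_of_lt humax)
    rw [hβdef, ← mul_div_assoc, div_le_iff₀ humax]
    linarith
  -- Gelfand's formula
  set A' := A.map Complex.ofReal with hA'def
  have hgel := spectrum.pow_nnnorm_pow_one_div_tendsto_nhds_spectralRadius A'
  have hβlim : Tendsto (fun k : ℕ => β ^ (1/(k:ℝ))) atTop (𝓝 1) := by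
    have h0 : Tendsto (fun k : ℕ => 1/(k:ℝ)) atTop (𝓝 0) := tendsto_one_div_atTop_nhds_zero_nat
    have h1 := Filter.Tendsto.rpow (tendsto_const_nhds (x := β)) h0 (Or.inl (ne_of_gt hβ))
    simpa using h1
  have hSlim : Tendsto (fun k : ℕ => ENNReal.ofReal (c * β ^ (1/(k:ℝ)))) atTop
      (𝓝 (ENNReal.ofReal c)) := by
    have h1 : Tendsto (fun k : ℕ => c * β ^ (1/(k:ℝ))) atTop (𝓝 (c * 1)) :=
      tendsto_const_nhds.mul hβlim
    rw [mul_one] at h1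
    exact (ENNReal.continuous_ofReal.tendsto c).comp h1
  have hev : ∀ᶠ k : ℕ in atTop, ENNReal.ofReal (c * β ^ (1/(k:ℝ)))
      ≤ (‖A' ^ k‖₊ : ℝ≥0∞) ^ (1/(k:ℝ)) := by
    filter_upwards [Filter.eventually_ge_atTop 1] with k hk
    have hk0 : (k:ℝ) ≠ 0 := by
      have : (1:ℝ) ≤ (k:ℝ) := by exact_mod_cast hk
      linarith
    have hreal : (c ^ k * β) ^ (1/(k:ℝ)) = c * β ^ (1/(k:ℝ)) := by
      rw [Real.mul_rpow (by positivity) (le_of_lt hβ)]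
      congr 1
      rw [← Real.rpow_natCast c k, ← Real.rpow_mul (le_of_lt hc),
        mul_one_div_cancel hk0, Real.rpow_one]
    have h2 : ENNReal.ofReal (c ^ k * β) ≤ (‖A' ^ k‖₊ : ℝ≥0∞) := by
      rw [← ENNReal.ofReal_coe_nnreal, coe_nnnorm]
      exact ENNReal.ofReal_le_ofReal (hnorm k)
    calc ENNReal.ofReal (c * β ^ (1/(k:ℝ))) = (ENNReal.ofReal (c ^ k * β)) ^ (1/(k:ℝ)) := by
          rw [ENNReal.ofReal_rpow_of_pos (by positivity), hreal]
      _ ≤ (‖A' ^ k‖₊ : ℝ≥0∞) ^ (1/(k:ℝ)) := ENNReal.rpow_le_rpow h2 (by positivity)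
  have hle : ENNReal.ofReal c ≤ spectralRadius ℂ A' :=
    le_of_tendsto_of_tendsto hSlim hgel hev
  have hub : spectralRadius ℂ A' ≤ ENNReal.ofReal (spectralRad A) := by
    have habs : ∀ μ ∈ spectrum ℂ A', ‖μ‖ ≤ spectralRad A := fun μ hμ =>
      le_csSup ((spectrum.isCompact A').image continuous_norm).bddAbove ⟨μ, hμ, rfl⟩
    unfold spectralRadius
    refine iSup₂_le fun μ hμ => ?_
    rw [← ENNReal.ofReal_coe_nnreal, coe_nnnorm]
    exact ENNReal.ofReal_le_ofReal (habs μ hμ)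
  exact (ENNReal.ofReal_le_ofReal_iff hρ0).mp (le_trans hle hub)

/-- **Perron–Frobenius**: an irreducible nonnegative matrix has a strictly positive
eigenvector with eigenvalue equal to its spectral radius. -/
lemma perron (hn : 0 < n) {A : Matrix (Fin n) (Fin n) ℝ} (hA : Nn A)
    (hirr : MatIrreducible A) :
    ∃ v : Fin n → ℝ, (∀ i, 0 < v i) ∧ A *ᵥ v = spectralRad A • v := by
  obtain ⟨μ0, hμ0, habs⟩ := exists_abs_eq_spectralRad hn A
  obtain ⟨x, hx, hμx⟩ := (mem_spectrum_iff _ _).mp hμ0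
  set ρ := spectralRad A with hρdef
  set y : Fin n → ℝ := fun i => ‖x i‖ with hydef
  have hy0 : ∀ i, 0 ≤ y i := fun i => norm_nonneg _
  obtain ⟨k, hk⟩ := Function.ne_iff.mp hx
  have hk' : x k ≠ 0 := by simpa using hk
  have hyk : 0 < y k := by simpa [hydef] using hk'
  have hsub : ∀ i, ρ * y i ≤ (A *ᵥ y) i := by
    intro i
    have h2 : μ0 * x i = ∑ j, (A i j : ℂ) * x j := by
      have h1 := congrFun hμx i
      rw [mulVecC_apply] at h1
      simp only [Matrix.map_apply, Pi.smul_apply, smul_eq_mul] at h1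
      exact h1.symm
    have h3 : ρ * y i = ‖∑ j, (A i j : ℂ) * x j‖ := by
      rw [← h2, norm_mul, habs]
    rw [h3, mulVec_apply]
    refine le_trans (norm_sum_le _ _) (le_of_eq (Finset.sum_congr rfl fun j _ => ?_))
    rw [norm_mul, Complex.norm_real, Real.norm_eq_abs, abs_of_nonneg (hA i j)]
  set z : Fin n → ℝ := fun i => (A *ᵥ y) i - ρ * y i with hzdef
  have hz0 : ∀ i, 0 ≤ z i := fun i => by
    have := hsub i
    simp only [hzdef]
    linarith
  have hAyz : A *ᵥ y = fun i => ρ * y i + z i := by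
    funext i
    simp only [hzdef]
    ring
  by_cases hz : ∀ i, z i = 0
  · -- equality case : `y` is an eigenvector
    have hAy : A *ᵥ y = ρ • y := by
      funext i
      have := hz i
      simp only [hzdef] at this
      simp only [Pi.smul_apply, smul_eq_mul]
      linarith
    obtain ⟨L, hL⟩ := exists_pow_mulVec_pos hA hirr hy0 hyk
    refine ⟨((1 + A) ^ L) *ᵥ y, hL, ?_⟩
    have hcomm : A * (1 + A) ^ L = (1 + A) ^ L * A :=
      ((((Commute.one_left A).add_left (Commute.refl A)).pow_left L).eq).symm
    rw [Matrix.mulVec_mulVec, hcomm, ← Matrix.mulVec_mulVec, hAy, Matrix.mulVec_smul]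
  · -- strict case : contradiction
    exfalso
    push_neg at hz
    obtain ⟨j0, hj0⟩ := hz
    have hzj0 : 0 < z j0 := lt_of_le_of_ne (hz0 j0) (Ne.symm hj0)
    obtain ⟨L1, hL1⟩ := exists_pow_mulVec_pos hA hirr hy0 hyk
    set B := (1 : Matrix (Fin n) (Fin n) ℝ) + A with hBdef
    set y1 := (B ^ L1) *ᵥ y with hy1def
    set z1 := (B ^ L1) *ᵥ z with hz1def
    have hz1 : ∀ i, 0 ≤ z1 i := (one_add_pow_nonneg hA L1).mulVec_nonneg hz0
    have hz1j0 : 0 < z1 j0 := lt_of_lt_of_le hzj0 (le_pow_mulVec hA L1 hz0 j0)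
    obtain ⟨L2, hL2⟩ := exists_pow_mulVec_pos hA hirr hz1 hz1j0
    set y2 := (B ^ L2) *ᵥ y1 with hy2def
    set z2 := (B ^ L2) *ᵥ z1 with hz2def
    have hy2pos : ∀ i, 0 < y2 i := fun i =>
      lt_of_lt_of_le (hL1 i) (le_pow_mulVec hA L2 (fun i => le_of_lt (hL1 i)) i)
    have hz2pos : ∀ i, 0 < z2 i := hL2
    -- A *ᵥ y2 = ρ • y2 + z2
    have hcomm : ∀ L : ℕ, A * B ^ L = B ^ L * A := fun L =>
      ((((Commute.one_left A).add_left (Commute.refl A)).pow_left L).eq).symm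
    have hkey : A *ᵥ y2 = fun i => ρ * y2 i + z2 i := by
      have e0 : A * B ^ L2 * B ^ L1 = B ^ L2 * B ^ L1 * A := by
        rw [hcomm L2, mul_assoc, hcomm L1, ← mul_assoc]
      have e1 : A *ᵥ y2 = (B ^ L2) *ᵥ ((B ^ L1) *ᵥ (A *ᵥ y)) := by
        rw [hy2def, hy1def, Matrix.mulVec_mulVec, Matrix.mulVec_mulVec, Matrix.mulVec_mulVec,
          Matrix.mulVec_mulVec, e0]
      rw [e1, hAyz]
      funext i
      have e2 : (fun i => ρ * y i + z i) = (ρ • y) + z := by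
        funext i; simp [Pi.smul_apply, smul_eq_mul]
      rw [e2, Matrix.mulVec_add, Matrix.mulVec_add, Matrix.mulVec_smul, Matrix.mulVec_smul]
      simp only [Pi.add_apply, Pi.smul_apply, smul_eq_mul, hy2def, hy1def, hz2def, hz1def]
    -- a uniform gap
    have hne : (Finset.univ : Finset (Fin n)).Nonempty := ⟨j0, Finset.mem_univ j0⟩
    set ε := Finset.univ.inf' hne (fun i => z2 i / y2 i) with hεdef
    have hε : 0 < ε := by
      rw [hεdef, Finset.lt_inf'_iff]
      exact fun i _ => div_pos (hz2pos i) (hy2pos i)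
    have hcu : ∀ i, (ρ + ε) * y2 i ≤ (A *ᵥ y2) i := by
      intro i
      have h1 : ε ≤ z2 i / y2 i := Finset.inf'_le _ (Finset.mem_univ i)
      have h2 : ε * y2 i ≤ z2 i := by
        rw [← div_mul_cancel₀ (z2 i) (ne_of_gt (hy2pos i))]
        exact mul_le_mul_of_nonneg_right h1 (le_of_lt (hy2pos i))
      have h3 := congrFun hkey i
      rw [h3]
      nlinarith
    have hρ0 : 0 ≤ ρ := spectralRad_nonneg hn A
    have := lower_CW hA hy2pos (by linarith : (0:ℝ) < ρ + ε) hcu hρ0 hn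
    rw [← hρdef] at this
    linarith

end PFaux

open PFaux in
/-- **Proposition.** If `Λ` is a negative diagonal matrix and `N` is an irreducible
nonnegative matrix, then for `M = Λ + N`: `s(M) < 0 ↔ ρ(−Λ⁻¹N) < 1`,
`s(M) = 0 ↔ ρ(−Λ⁻¹N) = 1`, and `s(M) > 0 ↔ ρ(−Λ⁻¹N) > 1`. -/
theorem spectral_abscissa_vs_spectral_radius
    {n : ℕ} (hn : 0 < n)
    (d : Fin n → ℝ) (hd : ∀ i, d i < 0)
    (Λ Nm M : Matrix (Fin n) (Fin n) ℝ)
    (hΛ : Λ = Matrix.diagonal d)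
    (hNnn : ∀ i j, 0 ≤ Nm i j)
    (hNirr : MatIrreducible Nm)
    (hM : M = Λ + Nm) :
    (spectralAbscissa M < 0 ↔ spectralRad (-(Λ⁻¹ * Nm)) < 1) ∧
    (spectralAbscissa M = 0 ↔ spectralRad (-(Λ⁻¹ * Nm)) = 1) ∧
    (spectralAbscissa M > 0 ↔ spectralRad (-(Λ⁻¹ * Nm)) > 1) := by
  have hdne : ∀ i, d i ≠ 0 := fun i => ne_of_lt (hd i)
  set A := -(Λ⁻¹ * Nm) with hAdef
  have hΛinv : Λ⁻¹ = Matrix.diagonal (fun i => (d i)⁻¹) := by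
    apply Matrix.inv_eq_right_inv
    rw [hΛ, Matrix.diagonal_mul_diagonal]
    have hfun : (fun i => d i * (d i)⁻¹) = fun _ => (1:ℝ) :=
      funext fun i => mul_inv_cancel₀ (hdne i)
    rw [hfun, Matrix.diagonal_one]
  have hAentries : ∀ i j, A i j = (-(d i)⁻¹) * Nm i j := by
    intro i j
    rw [hAdef, Matrix.neg_apply, hΛinv, Matrix.diagonal_mul]
    ring
  have hAnn : Nn A := by
    intro i j
    rw [hAentries i j]
    have h1 : (d i)⁻¹ < 0 := inv_lt_zero.mpr (hd i)
    nlinarith [hNnn i j]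
  have hAirr : MatIrreducible A := by
    intro i j hij
    refine Relation.TransGen.mono (r := fun a b => Nm b a > 0) (p := fun a b => A b a > 0) (fun a b hab => ?_) i j (hNirr i j hij)
    beta_reduce
    rw [hAentries b a]
    have h1 : (d b)⁻¹ < 0 := inv_lt_zero.mpr (hd b)
    nlinarith
  set ρ := spectralRad A with hρdef
  have hρ0 : 0 ≤ ρ := spectralRad_nonneg hn A
  obtain ⟨v, hv, hAv⟩ := perron hn hAnn hAirr
  rw [← hρdef] at hAv
  -- consequences for M
  have hNv : ∀ i, (Nm *ᵥ v) i = -(ρ * (d i * v i)) := by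
    intro i
    have h1 := congrFun hAv i
    rw [PFaux.mulVec_apply] at h1
    have h2 : ∑ j, A i j * v j = (-(d i)⁻¹) * ∑ j, Nm i j * v j := by
      rw [Finset.mul_sum]
      exact Finset.sum_congr rfl fun j _ => by rw [hAentries i j]; ring
    rw [h2] at h1
    simp only [Pi.smul_apply, smul_eq_mul] at h1
    rw [PFaux.mulVec_apply]
    have h3 := hdne i
    field_simp at h1 ⊢
    linarith [h1]
  have hMv : ∀ i, (M *ᵥ v) i = (1 - ρ) * (d i * v i) := by
    intro i
    rw [hM, Matrix.add_mulVec, Pi.add_apply, hΛ]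
    rw [Matrix.mulVec_diagonal, hNv i]
    ring
  have hvne : v ≠ 0 := by
    intro h
    have := hv ⟨0, hn⟩
    rw [h] at this
    simp at this
  have hoffM : ∀ i j, i ≠ j → 0 ≤ M i j := by
    intro i j hij
    rw [hM, Matrix.add_apply, hΛ, Matrix.diagonal_apply_ne _ hij]
    simpa using hNnn i j
  have hneF : (Finset.univ : Finset (Fin n)).Nonempty := ⟨⟨0, hn⟩, Finset.mem_univ _⟩
  set dmax := Finset.univ.sup' hneF d with hdmax
  have hdmaxneg : dmax < 0 := by
    rw [hdmax, Finset.sup'_lt_iff]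
    exact fun i _ => hd i
  have hdledmax : ∀ i, d i ≤ dmax := fun i => Finset.le_sup' d (Finset.mem_univ i)
  -- implication (a) : ρ < 1 → s(M) < 0
  have ha : ρ < 1 → spectralAbscissa M < 0 := by
    intro hρ
    set c := (1 - ρ) * dmax with hcdef
    have hc : c < 0 := mul_neg_of_pos_of_neg (by linarith) hdmaxneg
    have hMvc : ∀ i, (M *ᵥ v) i ≤ c * v i := by
      intro i
      rw [hMv i, hcdef]
      have : (1 - ρ) * d i ≤ (1 - ρ) * dmax :=
        mul_le_mul_of_nonneg_left (hdledmax i) (by linarith)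
      nlinarith [hv i]
    have hub : spectralAbscissa M ≤ c := by
      refine spectralAbscissa_le hn M fun μ hμ => ?_
      obtain ⟨x, hx, hμx⟩ := (mem_spectrum_iff _ _).mp hμ
      exact upper_CW hoffM hv hMvc hx hμx
    linarith
  -- implication (b) : ρ = 1 → s(M) = 0
  have hb : ρ = 1 → spectralAbscissa M = 0 := by
    intro hρ
    have hMv0 : M *ᵥ v = (0 : ℝ) • v := by
      funext i
      rw [hMv i, hρ]
      simp
    have hub : spectralAbscissa M ≤ 0 := by
      refine spectralAbscissa_le hn M fun μ hμ => ?_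
      obtain ⟨x, hx, hμx⟩ := (mem_spectrum_iff _ _).mp hμ
      refine upper_CW hoffM hv (fun i => ?_) hx hμx
      rw [hMv i, hρ]
      simp
    have hlb : (0:ℝ) ≤ spectralAbscissa M := by
      have hmem := real_eig_mem_spectrum M 0 v hvne hMv0
      have := re_le_spectralAbscissa M (by exact_mod_cast hmem)
      simpa using this
    linarith
  -- implication (c) : ρ > 1 → s(M) > 0
  have hc : ρ > 1 → spectralAbscissa M > 0 := by
    intro hρ
    set c := (1 - ρ) * dmax with hcdef
    have hcpos : 0 < c := mul_pos_of_neg_of_neg (by linarith) hdmaxneg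
    have hMvc : ∀ i, c * v i ≤ (M *ᵥ v) i := by
      intro i
      rw [hMv i, hcdef]
      have : (1 - ρ) * dmax ≤ (1 - ρ) * d i := by
        rw [← neg_neg (1 - ρ)]
        have h2 : (0:ℝ) ≤ -(1 - ρ) := by linarith
        nlinarith [hdledmax i]
      nlinarith [hv i]
    set β := 1 + Finset.univ.sup' hneF (fun i => -d i) with hβdef
    have hβd : ∀ i, -d i ≤ β - 1 := fun i => by
      rw [hβdef]
      have := Finset.le_sup' (fun i => -d i) (Finset.mem_univ i)
      linarith [this]
    have hβpos : 0 < β := by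
      have := hβd ⟨0, hn⟩
      have := hd ⟨0, hn⟩
      linarith
    set P := M + β • (1 : Matrix (Fin n) (Fin n) ℝ) with hPdef
    have hPentry : ∀ i j, P i j = M i j + (if i = j then β else 0) := by
      intro i j
      rw [hPdef, Matrix.add_apply, Matrix.smul_apply, Matrix.one_apply]
      by_cases h : i = j <;> simp [h]
    have hMentry : ∀ i j, M i j = (if i = j then d i else 0) + Nm i j := by
      intro i j
      rw [hM, Matrix.add_apply, hΛ, Matrix.diagonal_apply]
    have hPnn : Nn P := by
      intro i j
      rw [hPentry i j, hMentry i j]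
      by_cases h : i = j
      · subst h
        simp only [eq_self_iff_true, if_true]
        have h1 := hβd i
        have h2 := hNnn i i
        linarith
      · simp only [h, if_false]
        have := hNnn i j
        linarith
    have hPirr : MatIrreducible P := by
      intro i j hij
      refine Relation.TransGen.mono (r := fun a b => Nm b a > 0) (p := fun a b => P b a > 0) (fun a b hab => ?_) i j (hNirr i j hij)
      beta_reduce at hab ⊢
      rw [hPentry b a, hMentry b a]
      by_cases h : b = a
      · subst h
        simp only [eq_self_iff_true, if_true]
        have h1 := hβd b
        have h2 := hNnn b b
        linarith
      · simp only [h, if_false]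
        linarith
    have hPv : ∀ i, (c + β) * v i ≤ (P *ᵥ v) i := by
      intro i
      rw [hPdef, Matrix.add_mulVec, Pi.add_apply, Matrix.smul_mulVec,
        Matrix.one_mulVec, Pi.smul_apply, smul_eq_mul]
      have := hMvc i
      nlinarith [hv i]
    have hρP0 : 0 ≤ spectralRad P := spectralRad_nonneg hn P
    have hρPlb : c + β ≤ spectralRad P :=
      lower_CW hPnn hv (by linarith) hPv hρP0 hn
    obtain ⟨w, hw, hPw⟩ := perron hn hPnn hPirr
    have hwne : w ≠ 0 := by
      intro h
      have := hw ⟨0, hn⟩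
      rw [h] at this
      simp at this
    have hMw : M *ᵥ w = (spectralRad P - β) • w := by
      have h1 : M = P - β • (1 : Matrix (Fin n) (Fin n) ℝ) := by rw [hPdef, add_sub_cancel_right]
      rw [h1, Matrix.sub_mulVec, hPw, Matrix.smul_mulVec, Matrix.one_mulVec]
      funext i
      simp only [Pi.sub_apply, Pi.smul_apply, smul_eq_mul]
      ring
    have hmem := real_eig_mem_spectrum M (spectralRad P - β) w hwne hMw
    have hre := re_le_spectralAbscissa M hmem
    simp only [Complex.ofReal_re] at hre
    linarith
  -- wrap-up by trichotomy
  refine ⟨⟨fun h => ?_, ha⟩, ⟨fun h => ?_, hb⟩, ⟨fun h => ?_, hc⟩⟩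
  · rcases lt_trichotomy ρ 1 with h' | h' | h'
    · exact h'
    · exfalso; have := hb h'; linarith
    · exfalso; have := hc h'; linarith
  · rcases lt_trichotomy ρ 1 with h' | h' | h'
    · exfalso; have := ha h'; linarith
    · exact h'
    · exfalso; have := hc h'; linarith
  · rcases lt_trichotomy ρ 1 with h' | h' | h'
    · exfalso; have := ha h'; linarith
    · exfalso; have := hb h'; linarith
    · exact h'
end

section
/- In the networked SEIRS model with travel flows, assume the flow balance condition γ_i = Σ_{j≠i} Φ_{ij} holds for every i, all parameters α_i, β_i, σ_i, δ_i, γ_i are strictly positive, and s(U) < 0 for U = [[−Σ−Γ+Φ, B],[Σ, −D−Γ+Φ]]. Then the matrix exponential of the Jacobian J = [[−Σ−Γ+Φ, B, 0],[Σ, −D−Γ+Φ, 0],[0, D, −A−Γ+Φ]] at the healthy state decays: exp(tJ) → 0 as t → ∞, so every solution of the linearized (e,x,r)-dynamics at the healthy state converges to zero. -/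
open Finset Matrix NormedSpace Filter

section AuxDecay

lemma aux_scalar_decay {r : ℝ} (hr : r < 0) (j : ℕ) :
    Tendsto (fun t : ℝ => Real.exp (t * r) * t ^ j) atTop (nhds 0) := by
  have h1 : Tendsto (fun t : ℝ => (-r) * t) atTop atTop :=
    Tendsto.const_mul_atTop (by linarith) tendsto_id
  have h2 := (Real.tendsto_pow_mul_exp_neg_atTop_nhds_zero j).comp h1
  have h3 : Tendsto (fun t : ℝ => ((-r) ^ j)⁻¹ * (((-r) * t) ^ j * Real.exp (-((-r) * t))))
      atTop (nhds 0) := by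
    simpa using h2.const_mul (((-r) ^ j)⁻¹)
  refine h3.congr fun t => ?_
  have hrne : (-r) ^ j ≠ 0 := pow_ne_zero _ (by linarith)
  have he : -(-r * t) = t * r := by ring
  rw [mul_pow, he]
  field_simp

variable {m : Type*} [Fintype m] [DecidableEq m]

lemma exp_mulVec_eq (M : Matrix m m ℂ) (μ : ℂ) (k : ℕ) (w : m → ℂ)
    (hk : ((M - μ • 1) ^ k).mulVec w = 0) (t : ℝ) :
    (exp (t • M)).mulVec w =
      ∑ j ∈ Finset.range k,
        (Complex.exp ((t : ℂ) * μ) * (t : ℂ) ^ j * ((Nat.factorial j : ℂ))⁻¹) •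
          ((M - μ • 1) ^ j).mulVec w := by
  letI : SeminormedRing (Matrix m m ℂ) := Matrix.linftyOpSemiNormedRing
  letI : NormedRing (Matrix m m ℂ) := Matrix.linftyOpNormedRing
  letI : NormedAlgebra ℂ (Matrix m m ℂ) := Matrix.linftyOpNormedAlgebra
  set N : Matrix m m ℂ := M - μ • 1 with hN
  have h1 : exp (t • M) = exp (t • M) := rfl
  have hsplit : t • M = t • N + ((t : ℂ) * μ) • (1 : Matrix m m ℂ) := by
    have h2 : ((t : ℂ) * μ) • (1 : Matrix m m ℂ) = t • (μ • (1 : Matrix m m ℂ)) := by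
      rw [← Complex.real_smul, smul_assoc]
    rw [hN, smul_sub, h2]
    simp
  have hcomm : Commute (t • N) (((t : ℂ) * μ) • (1 : Matrix m m ℂ)) :=
    (Commute.one_right _).smul_right _
  have hexp1 : exp (((t : ℂ) * μ) • (1 : Matrix m m ℂ)) =
      Complex.exp ((t : ℂ) * μ) • (1 : Matrix m m ℂ) := by
    have hd : ((t : ℂ) * μ) • (1 : Matrix m m ℂ) =
        Matrix.diagonal (fun _ : m => (t : ℂ) * μ) := by
      ext i j
      by_cases hij : i = j <;> simp [hij, Matrix.one_apply, Matrix.diagonal]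
    rw [hd, Matrix.exp_diagonal]
    ext i j
    by_cases hij : i = j <;>
      simp [hij, Matrix.one_apply, Matrix.diagonal, Pi.exp_def,
        ← Complex.exp_eq_exp_ℂ]
  have hmain : exp (t • M) = Complex.exp ((t : ℂ) * μ) • exp (t • N) := by
    rw [hsplit, Matrix.exp_add_of_commute _ _ hcomm, hexp1, mul_smul_comm, mul_one]
  let L : Matrix m m ℂ →ₗ[ℂ] (m → ℂ) :=
    { toFun := fun X => X.mulVec w
      map_add' := fun X Y => Matrix.add_mulVec X Y w
      map_smul' := fun c X => Matrix.smul_mulVec c X w }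
  have hLc : Continuous L := LinearMap.continuous_of_finiteDimensional L
  have hs := ((exp_series_hasSum_exp' (𝕂 := ℂ) (t • N)).map L hLc)
  have hterm : ∀ j : ℕ, L (((Nat.factorial j : ℂ))⁻¹ • (t • N) ^ j) =
      ((t : ℂ) ^ j * ((Nat.factorial j : ℂ))⁻¹) • (N ^ j).mulVec w := by
    intro j
    have h3 : (t • N) ^ j = (t ^ j : ℝ) • N ^ j := smul_pow t N j
    have h4 : L ((t ^ j : ℝ) • N ^ j) = (t ^ j : ℝ) • (N ^ j).mulVec w :=
      Matrix.smul_mulVec (t ^ j) (N ^ j) w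
    rw [h3, _root_.map_smul, h4, ← algebraMap_smul ℂ (t ^ j) ((N ^ j).mulVec w), smul_smul]
    congr 1
    simp [Algebra.algebraMap_eq_smul_one]
    ring
  have hzero : ∀ b ∉ Finset.range k, L (((Nat.factorial b : ℂ))⁻¹ • (t • N) ^ b) = 0 := by
    intro b hb
    rw [hterm]
    have hkb : k ≤ b := by simpa using hb
    have : (N ^ b).mulVec w = 0 := by
      rw [← Nat.sub_add_cancel hkb, pow_add, ← Matrix.mulVec_mulVec, hk, Matrix.mulVec_zero]
    rw [this, smul_zero]
  have hexpN : L (exp (t • N)) =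
      ∑ j ∈ Finset.range k, ((t : ℂ) ^ j * ((Nat.factorial j : ℂ))⁻¹) • (N ^ j).mulVec w := by
    have := ((hasSum_sum_of_ne_finset_zero hzero).unique hs).symm
    refine this.trans ?_
    exact Finset.sum_congr rfl fun j _ => hterm j
  have hLapp : L (exp (t • N)) = (exp (t • N)).mulVec w := rfl
  rw [h1, hmain, Matrix.smul_mulVec, ← hLapp, hexpN, Finset.smul_sum]
  refine Finset.sum_congr rfl fun j _ => ?_
  rw [smul_smul]
  ring_nf

lemma cscalar_decay {μ : ℂ} (hre : μ.re < 0) (j : ℕ) (c : ℂ) :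
    Tendsto (fun t : ℝ => Complex.exp ((t : ℂ) * μ) * (t : ℂ) ^ j * c) atTop (nhds 0) := by
  have hb : Tendsto (fun t : ℝ => Real.exp (t * μ.re) * t ^ j * ‖c‖) atTop (nhds 0) := by
    simpa using (aux_scalar_decay hre j).mul_const ‖c‖
  refine squeeze_zero_norm' ?_ hb
  filter_upwards [eventually_ge_atTop (0 : ℝ)] with t ht
  have h1 : ‖Complex.exp ((t : ℂ) * μ)‖ = Real.exp (t * μ.re) := by
    rw [Complex.norm_exp]
    norm_num
  rw [norm_mul, norm_mul, h1, norm_pow, Complex.norm_real]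
  simp [abs_of_nonneg ht, le_refl]

lemma decay_mulVec (M : Matrix m m ℂ) (h : ∀ μ ∈ spectrum ℂ M, μ.re < 0) (v : m → ℂ) :
    Tendsto (fun t : ℝ => (exp (t • M)).mulVec v) atTop (nhds 0) := by
  set f : Module.End ℂ (m → ℂ) := Matrix.toLinAlgEquiv' M with hf
  have hv : v ∈ ⨆ μ : ℂ, f.maxGenEigenspace μ := by
    rw [Module.End.iSup_maxGenEigenspace_eq_top]; trivial
  refine Submodule.iSup_induction _
    (motive := fun x => Tendsto (fun t : ℝ => (exp (t • M)).mulVec x) atTop (nhds 0)) hv ?_ ?_ ?_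
  · intro μ w hw
    by_cases hw0 : w = 0
    · simpa [hw0] using (tendsto_const_nhds :
        Tendsto (fun _ : ℝ => (0 : m → ℂ)) atTop (nhds 0))
    obtain ⟨k, hk⟩ := (Module.End.mem_maxGenEigenspace f μ w).mp hw
    have hmap : Matrix.toLinAlgEquiv' ((M - μ • 1 : Matrix m m ℂ) ^ k) = (f - μ • 1) ^ k := by
      rw [map_pow, map_sub, hf]
      congr 1
      rw [_root_.map_smul, _root_.map_one]
    have hmk : ((M - μ • (1 : Matrix m m ℂ)) ^ k).mulVec w = 0 := by
      have h5 : ((M - μ • (1 : Matrix m m ℂ)) ^ k).mulVec w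
          = (Matrix.toLinAlgEquiv' ((M - μ • 1 : Matrix m m ℂ) ^ k)) w := by
        rw [Matrix.toLinAlgEquiv'_apply]
      rw [h5, hmap, hk]
    have hre : μ.re < 0 := by
      apply h
      have h1 : f.HasUnifEigenvalue μ ⊤ := (Submodule.ne_bot_iff _).mpr ⟨w, hw, hw0⟩
      have h2 : f.HasUnifEigenvalue μ 1 := h1.lt zero_lt_one
      have h3 : μ ∈ spectrum ℂ f := h2.mem_spectrum
      rwa [hf, AlgEquiv.spectrum_eq] at h3
    refine Tendsto.congr (fun t => (exp_mulVec_eq M μ k w hmk t).symm) ?_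
    have h0 : (0 : m → ℂ) = ∑ j ∈ Finset.range k, (0 : m → ℂ) := by simp
    rw [h0]
    refine tendsto_finset_sum _ fun j _ => ?_
    simpa using (cscalar_decay hre j ((Nat.factorial j : ℂ))⁻¹).smul_const
      (((M - μ • (1 : Matrix m m ℂ)) ^ j).mulVec w)
  · simpa using (tendsto_const_nhds :
      Tendsto (fun _ : ℝ => (0 : m → ℂ)) atTop (nhds 0))
  · intro x y hx hy
    simpa [Matrix.mulVec_add] using hx.add hy

lemma decay_matrix_complex (M : Matrix m m ℂ) (h : ∀ μ ∈ spectrum ℂ M, μ.re < 0) :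
    Tendsto (fun t : ℝ => exp (t • M)) atTop (nhds 0) := by
  have key : ∀ p q, Tendsto (fun t : ℝ => exp (t • M) p q) atTop (nhds 0) := by
    intro p q
    have h1 := tendsto_pi_nhds.mp (decay_mulVec M h (Pi.single q 1)) p
    simp only [Matrix.mulVec_single_one, mul_one, Pi.zero_apply] at h1
    exact h1
  refine tendsto_pi_nhds.mpr ?_
  intro p
  refine tendsto_pi_nhds.mpr ?_
  intro q
  exact key p q

lemma decay_matrix_real (M : Matrix m m ℝ)
    (h : ∀ μ ∈ spectrum ℂ (M.map Complex.ofReal), μ.re < 0) :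
    Tendsto (fun t : ℝ => exp (t • M)) atTop (nhds 0) := by
  have hmapexp : ∀ t : ℝ,
      (exp (t • M)).map Complex.ofReal = exp (t • M.map Complex.ofReal) := by
    intro t
    letI : SeminormedRing (Matrix m m ℝ) := Matrix.linftyOpSemiNormedRing
    letI : NormedRing (Matrix m m ℝ) := Matrix.linftyOpNormedRing
    letI : NormedAlgebra ℝ (Matrix m m ℝ) := Matrix.linftyOpNormedAlgebra
    letI : SeminormedRing (Matrix m m ℂ) := Matrix.linftyOpSemiNormedRing
    letI : NormedRing (Matrix m m ℂ) := Matrix.linftyOpNormedRing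
    letI : NormedAlgebra ℝ (Matrix m m ℂ) := Matrix.linftyOpNormedAlgebra
    letI : NormedAlgebra ℚ (Matrix m m ℝ) := Matrix.linftyOpNormedAlgebra
    letI : NormedAlgebra ℚ (Matrix m m ℂ) := Matrix.linftyOpNormedAlgebra
    have hcont : Continuous (Complex.ofRealAm.mapMatrix (m := m)) := by
      have : Continuous (fun X : Matrix m m ℝ => X.map Complex.ofReal) :=
        continuous_id.matrix_map Complex.continuous_ofReal
      exact this
    have h2 := map_exp (Complex.ofRealAm.mapMatrix (m := m)) hcont (t • M)
    have h3 : Complex.ofRealAm.mapMatrix (t • M) = t • M.map Complex.ofReal := by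
      ext p q
      simp [Complex.ofRealAm, AlgHom.mapMatrix, Algebra.ofId_apply, Complex.coe_algebraMap]
    have h4 : Complex.ofRealAm.mapMatrix (exp (t • M)) = (exp (t • M)).map Complex.ofReal := by
      ext p q
      simp [Complex.ofRealAm, AlgHom.mapMatrix, Algebra.ofId_apply, Complex.coe_algebraMap]
    exact h4.symm.trans (h2.trans (congrArg _ h3))
  have key : ∀ p q, Tendsto (fun t : ℝ => exp (t • M) p q) atTop (nhds 0) := by
    intro p q
    have h1 := tendsto_pi_nhds.mp (tendsto_pi_nhds.mp (decay_matrix_complex _ h) p) q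
    have h2 : ∀ t : ℝ, exp (t • M) p q = (exp (t • M.map Complex.ofReal) p q).re := by
      intro t
      rw [← hmapexp t]
      simp [Matrix.map_apply]
    rw [funext h2]
    have := (Complex.continuous_re.tendsto 0).comp h1
    simpa [Function.comp_def] using this
  refine tendsto_pi_nhds.mpr ?_
  intro p
  refine tendsto_pi_nhds.mpr ?_
  intro q
  exact key p q

lemma re_le_spectralAbscissa' (Ur : Matrix m m ℝ) {μ : ℂ}
    (hμ : μ ∈ spectrum ℂ (Ur.map Complex.ofReal)) :
    μ.re ≤ sSup (Complex.re '' spectrum ℂ (Ur.map Complex.ofReal)) :=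
  le_csSup (((Matrix.finite_spectrum _).image _).bddAbove) ⟨μ, hμ, rfl⟩

lemma gershgorin_re_neg {n : ℕ} (α' γ' : Fin n → ℝ) (Φm : Matrix (Fin n) (Fin n) ℝ)
    (hα : ∀ i, 0 < α' i) (hΦnn : ∀ i j, 0 ≤ Φm i j) (hΦdiag : ∀ i, Φm i i = 0)
    (hbal : ∀ i, γ' i = ∑ j ∈ Finset.univ.erase i, Φm i j) {μ : ℂ}
    (hμ : Module.End.HasEigenvalue (Matrix.toLin'
      ((-(Matrix.diagonal α') - Matrix.diagonal γ' + Φm).map Complex.ofReal)) μ) :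
    μ.re < 0 := by
  set Z : Matrix (Fin n) (Fin n) ℝ := -(Matrix.diagonal α') - Matrix.diagonal γ' + Φm with hZ
  obtain ⟨k, hk⟩ := eigenvalue_mem_ball hμ
  have hdiag : (Z.map Complex.ofReal) k k = ((- α' k - γ' k : ℝ) : ℂ) := by
    simp [hZ, Matrix.map_apply, Matrix.add_apply, Matrix.sub_apply, Matrix.neg_apply,
      Matrix.diagonal_apply_eq, hΦdiag k]
  have hoff : ∀ j ∈ Finset.univ.erase k, ‖(Z.map Complex.ofReal) k j‖ = Φm k j := by
    intro j hj
    have hjk : k ≠ j := fun hc => (Finset.mem_erase.mp hj).1 hc.symm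
    have : (Z.map Complex.ofReal) k j = ((Φm k j : ℝ) : ℂ) := by
      simp [hZ, Matrix.map_apply, Matrix.add_apply, Matrix.sub_apply, Matrix.neg_apply,
        Matrix.diagonal_apply_ne _ hjk]
    rw [this, Complex.norm_real, Real.norm_eq_abs, abs_of_nonneg (hΦnn k j)]
  have hsum : ∑ j ∈ Finset.univ.erase k, ‖(Z.map Complex.ofReal) k j‖ = γ' k := by
    rw [Finset.sum_congr rfl hoff, ← hbal k]
  rw [Metric.mem_closedBall, dist_eq_norm, hsum, hdiag] at hk
  have h1 : (μ - ((- α' k - γ' k : ℝ) : ℂ)).re ≤ ‖μ - ((- α' k - γ' k : ℝ) : ℂ)‖ :=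
    Complex.re_le_norm _
  have h2 : (μ - ((- α' k - γ' k : ℝ) : ℂ)).re = μ.re - (- α' k - γ' k) := by
    simp
  have := hα k
  nlinarith [h1, h2, hk]

end AuxDecay

/-- **Exponential decay of the linearized healthy-state dynamics.**
If `s(U) < 0`, then `exp(tJ) → 0` as `t → ∞` for the Jacobian `J` of the
`(e,x,r)`-dynamics at the healthy state, so every solution of the linearized dynamics
converges to zero. -/
theorem healthy_state_linearization_decays
    {n : ℕ} (hn : 1 ≤ n)
    (N α β σ δ γ : Fin n → ℝ) (w : Fin n → Fin n → ℝ)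
    (hN : ∀ i, 0 < N i) (hα : ∀ i, 0 < α i) (hβ : ∀ i, 0 < β i)
    (hσ : ∀ i, 0 < σ i) (hδ : ∀ i, 0 < δ i) (hγ : ∀ i, 0 < γ i)
    (hwdiag : ∀ i, w i i = 0) (hwnn : ∀ i j, 0 ≤ w i j)
    (hwsum : ∀ j, ∑ i ∈ Finset.univ.erase j, w i j = 1)
    (Φm : Matrix (Fin n) (Fin n) ℝ)
    (hΦ : ∀ i j, Φm i j = if i = j then 0 else (N j / N i) * w i j * γ j)
    (hbal : ∀ i, γ i = ∑ j ∈ Finset.univ.erase i, Φm i j)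
    (U : Matrix (Fin 2 × Fin n) (Fin 2 × Fin n) ℝ)
    (hU : U = blockMat
      ![![-(Matrix.diagonal σ) - Matrix.diagonal γ + Φm, Matrix.diagonal β],
        ![Matrix.diagonal σ, -(Matrix.diagonal δ) - Matrix.diagonal γ + Φm]])
    (J : Matrix (Fin 3 × Fin n) (Fin 3 × Fin n) ℝ)
    (hJ : J = blockMat
      ![![-(Matrix.diagonal σ) - Matrix.diagonal γ + Φm, Matrix.diagonal β, 0],
        ![Matrix.diagonal σ, -(Matrix.diagonal δ) - Matrix.diagonal γ + Φm, 0],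
        ![0, Matrix.diagonal δ, -(Matrix.diagonal α) - Matrix.diagonal γ + Φm]])
    (hsU : spectralAbscissa U < 0) :
    Tendsto (fun t : ℝ => exp (t • J)) atTop (nhds 0) ∧
    ∀ v : Fin 3 × Fin n → ℝ,
      Tendsto (fun t : ℝ => (exp (t • J)).mulVec v) atTop (nhds 0) := by
  have hΦnn : ∀ i j, 0 ≤ Φm i j := by
    intro i j
    rw [hΦ]
    by_cases hij : i = j
    · simp [hij]
    · simp only [hij, if_false]
      exact mul_nonneg (mul_nonneg (div_nonneg (hN j).le (hN i).le) (hwnn i j)) (hγ j).le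
  have hΦdiag : ∀ i, Φm i i = 0 := by
    intro i; rw [hΦ]; simp
  -- All eigenvalues of `J` (over `ℂ`) have negative real part.
  have hspec : ∀ μ ∈ spectrum ℂ (J.map Complex.ofReal), μ.re < 0 := by
    intro μ hμ
    have hev : Module.End.HasEigenvalue (Matrix.toLin' (J.map Complex.ofReal)) μ := by
      have h0 : Matrix.toLin' (J.map Complex.ofReal)
          = (Matrix.toLinAlgEquiv' (J.map Complex.ofReal) : Module.End ℂ _) := rfl
      rw [h0]
      exact Module.End.hasEigenvalue_iff_mem_spectrum.mpr
        (by rwa [AlgEquiv.spectrum_eq])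
    obtain ⟨x, hx1, hx2⟩ := hev.exists_hasEigenvector
    have hxeq : (J.map Complex.ofReal).mulVec x = μ • x := by
      have h1 := Module.End.mem_eigenspace_iff.mp hx1
      rwa [Matrix.toLin'_apply] at h1
    have hrow : ∀ (a : Fin 3) (i : Fin n),
        ∑ b : Fin 3, ∑ j, (J.map Complex.ofReal) (a,i) (b,j) * x (b,j) = μ * x (a,i) := by
      intro a i
      have h1 := congrFun hxeq (a, i)
      simp only [Matrix.mulVec, dotProduct, Pi.smul_apply, smul_eq_mul] at h1
      rw [← h1, Fintype.sum_prod_type]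
    -- candidate eigenvector of `U`
    set u : Fin 2 × Fin n → ℂ :=
      fun p => x (Fin.castSucc p.1, p.2) with hu_def
    have hcast0 : (Fin.castSucc (0 : Fin 2)) = (0 : Fin 3) := by decide
    have hcast1 : (Fin.castSucc (1 : Fin 2)) = (1 : Fin 3) := by decide
    by_cases hu : u = 0
    · -- the `(e,x)` components vanish; `x` restricts to an eigenvector of the `r`-block.
      have hx0 : ∀ i, x ((0 : Fin 3), i) = 0 := by
        intro i
        have h1 := congrFun hu ((0 : Fin 2), i)
        simp only [hu_def, Pi.zero_apply] at h1
        rwa [hcast0] at h1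
      have hx1' : ∀ i, x ((1 : Fin 3), i) = 0 := by
        intro i
        have h1 := congrFun hu ((1 : Fin 2), i)
        simp only [hu_def, Pi.zero_apply] at h1
        rwa [hcast1] at h1
      set y : Fin n → ℂ := fun j => x ((2 : Fin 3), j) with hy_def
      have hy0 : y ≠ 0 := by
        intro hy
        apply hx2
        funext p
        obtain ⟨b, i⟩ := p
        fin_cases b
        · exact hx0 i
        · exact hx1' i
        · exact congrFun hy i
      have hyeq : (((-(Matrix.diagonal α) - Matrix.diagonal γ + Φm)).map
          Complex.ofReal).mulVec y = μ • y := by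
        funext i
        have h1 := hrow 2 i
        rw [Fin.sum_univ_three] at h1
        have e20 : ∀ j, (J.map Complex.ofReal) ((2:Fin 3),i) ((0:Fin 3),j) = 0 := by
          intro j; subst hJ; simp [blockMat, Matrix.map_apply]
        have e22 : ∀ j, (J.map Complex.ofReal) ((2:Fin 3),i) ((2:Fin 3),j)
            = (((-(Matrix.diagonal α) - Matrix.diagonal γ + Φm) i j : ℝ) : ℂ) := by
          intro j; subst hJ; simp [blockMat, Matrix.map_apply]
        simp only [e20, zero_mul, Finset.sum_const_zero, zero_add] at h1
        have h2 : ∑ j, (J.map Complex.ofReal) ((2:Fin 3),i) ((1:Fin 3),j) * x ((1:Fin 3),j)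
            = 0 := by
          refine Finset.sum_eq_zero fun j _ => ?_
          rw [hx1' j, mul_zero]
        rw [h2, zero_add] at h1
        simp only [Matrix.mulVec, dotProduct, Pi.smul_apply, smul_eq_mul]
        rw [← h1]
        refine Finset.sum_congr rfl fun j _ => ?_
        rw [e22 j]
        simp [hy_def, Matrix.map_apply]
      have hevZ : Module.End.HasEigenvalue (Matrix.toLin'
          (((-(Matrix.diagonal α) - Matrix.diagonal γ + Φm)).map Complex.ofReal)) μ :=
        Module.End.hasEigenvalue_of_hasEigenvector
          ⟨Module.End.mem_eigenspace_iff.mpr (by rw [Matrix.toLin'_apply]; exact hyeq), hy0⟩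
      exact gershgorin_re_neg α γ Φm hα hΦnn hΦdiag hbal hevZ
    · -- `u` is an eigenvector of `U`.
      have hueq : (U.map Complex.ofReal).mulVec u = μ • u := by
        funext p
        obtain ⟨a, i⟩ := p
        simp only [Matrix.mulVec, dotProduct, Pi.smul_apply, smul_eq_mul]
        rw [Fintype.sum_prod_type, Fin.sum_univ_two]
        fin_cases a
        · have h1 := hrow 0 i
          rw [Fin.sum_univ_three] at h1
          have e02 : ∀ j, (J.map Complex.ofReal) ((0:Fin 3),i) ((2:Fin 3),j) = 0 := by
            intro j; subst hJ; simp [blockMat, Matrix.map_apply]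
          simp only [e02, zero_mul, Finset.sum_const_zero, add_zero] at h1
          have eu00 : ∀ j, (U.map Complex.ofReal) ((0:Fin 2),i) ((0:Fin 2),j)
              = (J.map Complex.ofReal) ((0:Fin 3),i) ((0:Fin 3),j) := by
            intro j; subst hJ; subst hU; simp [blockMat, Matrix.map_apply]
          have eu01 : ∀ j, (U.map Complex.ofReal) ((0:Fin 2),i) ((1:Fin 2),j)
              = (J.map Complex.ofReal) ((0:Fin 3),i) ((1:Fin 3),j) := by
            intro j; subst hJ; subst hU; simp [blockMat, Matrix.map_apply]
          simp only [hu_def, Fin.mk_zero, Fin.mk_one, Fin.castSucc_zero, Fin.castSucc_one,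
            eu00, eu01]
          exact h1
        · have h1 := hrow 1 i
          rw [Fin.sum_univ_three] at h1
          have e12 : ∀ j, (J.map Complex.ofReal) ((1:Fin 3),i) ((2:Fin 3),j) = 0 := by
            intro j; subst hJ; simp [blockMat, Matrix.map_apply]
          simp only [e12, zero_mul, Finset.sum_const_zero, add_zero] at h1
          have eu10 : ∀ j, (U.map Complex.ofReal) ((1:Fin 2),i) ((0:Fin 2),j)
              = (J.map Complex.ofReal) ((1:Fin 3),i) ((0:Fin 3),j) := by
            intro j; subst hJ; subst hU; simp [blockMat, Matrix.map_apply]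
          have eu11 : ∀ j, (U.map Complex.ofReal) ((1:Fin 2),i) ((1:Fin 2),j)
              = (J.map Complex.ofReal) ((1:Fin 3),i) ((1:Fin 3),j) := by
            intro j; subst hJ; subst hU; simp [blockMat, Matrix.map_apply]
          simp only [hu_def, Fin.mk_zero, Fin.mk_one, Fin.castSucc_zero, Fin.castSucc_one,
            eu10, eu11]
          exact h1
      have hevU : Module.End.HasEigenvalue (Matrix.toLin' (U.map Complex.ofReal)) μ :=
        Module.End.hasEigenvalue_of_hasEigenvector
          ⟨Module.End.mem_eigenspace_iff.mpr (by rw [Matrix.toLin'_apply]; exact hueq), hu⟩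
      have hμU : μ ∈ spectrum ℂ (U.map Complex.ofReal) := by
        have h0 : Matrix.toLin' (U.map Complex.ofReal)
            = (Matrix.toLinAlgEquiv' (U.map Complex.ofReal) : Module.End ℂ _) := rfl
        rw [h0] at hevU
        have := Module.End.hasEigenvalue_iff_mem_spectrum.mp hevU
        rwa [AlgEquiv.spectrum_eq] at this
      calc μ.re ≤ spectralAbscissa U := re_le_spectralAbscissa' U hμU
        _ < 0 := hsU
  refine ⟨decay_matrix_real J hspec, fun v => ?_⟩
  have h1 := decay_matrix_real J hspec
  let L : Matrix (Fin 3 × Fin n) (Fin 3 × Fin n) ℝ →ₗ[ℝ] (Fin 3 × Fin n → ℝ) :=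
    { toFun := fun X => X.mulVec v
      map_add' := fun X Y => Matrix.add_mulVec X Y v
      map_smul' := fun c X => Matrix.smul_mulVec c X v }
  have hLc : Continuous L := LinearMap.continuous_of_finiteDimensional L
  have h2 := (hLc.tendsto 0).comp h1
  simpa [L, Matrix.zero_mulVec, Function.comp_def] using h2
end
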